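/- arXiv:2003.12534 — 4 statements merged into one kernel-verified Lean document; each statement's English description precedes it below -/
import Mathlib

section
/- Let F : ℝ^d → ℝ be bounded, nonnegative, radial, with ∫ F = 1, and suppose |F(v) - γ/|v|^{d+2s}| ≤ C/|v|^{d+4s} for all |v| ≥ 1, where s ∈ (0,1), γ, C > 0. Define F₁(w) = ∫₀^∞ e^{-ν₀ τ} ν₀² τ^{-d} F(w/τ) dτ and G(w) = F₁(w) - γ₁/|w|^{d+2s} with γ₁ = γ ν₀^{1-2s} Γ(2s+1). Then there is a constant C' > 0 such that |G(w)| ≤ C'/|w|^{d+2s} for all 0 < |w| ≤ 1, and |G(w)| ≤ C'/|w|^{d+4s} for all |w| > 1. -/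
open MeasureTheory Real Set

lemma stmt1_aux_int (p b : ℝ) (hp : -1 < p) (hb : 0 < b) :
    IntegrableOn (fun τ : ℝ => Real.exp (-(b*τ)) * τ ^ p) (Set.Ioi 0) := by
  have h := integrableOn_rpow_mul_exp_neg_mul_rpow hp one_pos hb
  refine h.congr_fun (fun x hx => ?_) measurableSet_Ioi
  dsimp only
  rw [Real.rpow_one, mul_comm, neg_mul]

lemma stmt1_aux_val (p b : ℝ) (hp : -1 < p) (hb : 0 < b) :
    ∫ τ in Set.Ioi (0:ℝ), Real.exp (-(b*τ)) * τ ^ p = (1/b)^(p+1) * Real.Gamma (p+1) := by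
  rw [← Real.integral_rpow_mul_exp_neg_mul_Ioi (by linarith) hb]
  refine setIntegral_congr_fun measurableSet_Ioi fun t ht => ?_
  rw [add_sub_cancel_right, mul_comm]

lemma stmt1_pow_cancel {τ : ℝ} (hτ : 0 < τ) (d a : ℝ) :
    τ ^ (-d) * τ ^ (d + a) = τ ^ a := by
  rw [← Real.rpow_add hτ]; ring_nf

lemma stmt1_key {τ r : ℝ} (hτ : 0 < τ) (hr : 0 < r) (c d e : ℝ) :
    τ ^ (-d) * (c / (r/τ) ^ (d + e)) = c * τ ^ e / r ^ (d + e) := by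
  rw [Real.div_rpow hr.le hτ.le, div_div_eq_mul_div,
    show τ^(-d) * (c * τ^(d+e) / r^(d+e)) = c * (τ^(-d) * τ^(d+e)) / r^(d+e) from by ring,
    stmt1_pow_cancel hτ]

lemma stmt1_Q {τ r : ℝ} (hτ : 0 < τ) (hr : 0 < r) (d e : ℝ) :
    τ ^ e / r ^ (d+e) = (τ/r) ^ e / r ^ d := by
  rw [Real.div_rpow hτ.le hr.le, Real.rpow_add hr, div_div, mul_comm]

/-- Deviation estimate for the kernel `F₁` against the pure power law:
`|G(w)| ≤ C'/|w|^{d+2s}` for `0 < |w| ≤ 1` and `|G(w)| ≤ C'/|w|^{d+4s}` for `|w| > 1`. -/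
theorem stmt1 (d : ℕ) (hd : 1 ≤ d) (s γ C ν₀ : ℝ) (hs : s ∈ Set.Ioo (0:ℝ) 1)
    (hγ : 0 < γ) (hC : 0 < C) (hν : 0 < ν₀)
    (F : EuclideanSpace ℝ (Fin d) → ℝ)
    (hFmeas : Measurable F)
    (hFbdd : ∃ M, ∀ v, F v ≤ M)
    (hFpos : ∀ v, 0 ≤ F v)
    (hFrad : ∀ v w : EuclideanSpace ℝ (Fin d), ‖v‖ = ‖w‖ → F v = F w)
    (hFi : Integrable F)
    (hFint : ∫ v, F v = 1)
    (hFtail : ∀ v : EuclideanSpace ℝ (Fin d), 1 ≤ ‖v‖ →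
      |F v - γ / ‖v‖ ^ ((d : ℝ) + 2 * s)| ≤ C / ‖v‖ ^ ((d : ℝ) + 4 * s))
    (F₁ G : EuclideanSpace ℝ (Fin d) → ℝ)
    (hF₁ : ∀ w, F₁ w = ∫ τ in Set.Ioi (0:ℝ),
      Real.exp (-ν₀ * τ) * ν₀ ^ 2 * τ ^ (-(d:ℝ)) * F (τ⁻¹ • w))
    (hG : ∀ w, G w = F₁ w
      - γ * ν₀ ^ (1 - 2*s) * Real.Gamma (2*s+1) / ‖w‖ ^ ((d:ℝ) + 2*s)) :
    ∃ C' > (0:ℝ), ∀ w : EuclideanSpace ℝ (Fin d),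
      (0 < ‖w‖ → ‖w‖ ≤ 1 → |G w| ≤ C' / ‖w‖ ^ ((d:ℝ) + 2*s)) ∧
      (1 < ‖w‖ → |G w| ≤ C' / ‖w‖ ^ ((d:ℝ) + 4*s)) := by
  obtain ⟨s0, s1⟩ := hs
  obtain ⟨M, hM⟩ := hFbdd
  have hM0 : 0 ≤ M := le_trans (hFpos 0) (hM 0)
  set K : ℝ := ν₀^2 * (C + M + γ) with hKdef
  have hK : 0 < K := by positivity
  set I₂ : ℝ := (1/ν₀)^(2*s+1) * Real.Gamma (2*s+1) with hI₂def
  set I₄ : ℝ := (1/ν₀)^(4*s+1) * Real.Gamma (4*s+1) with hI₄def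
  have hI₂ : 0 < I₂ :=
    mul_pos (Real.rpow_pos_of_pos (by positivity) _) (Real.Gamma_pos_of_pos (by linarith))
  have hI₄ : 0 < I₄ :=
    mul_pos (Real.rpow_pos_of_pos (by positivity) _) (Real.Gamma_pos_of_pos (by linarith))
  refine ⟨K * (I₂ + I₄), by positivity, fun w => ?_⟩
  by_cases hw : ‖w‖ = 0
  · exact ⟨fun h1 _ => by simp [hw] at h1, fun h1 => by simp [hw] at h1; linarith⟩
  have hr : 0 < ‖w‖ := lt_of_le_of_ne (norm_nonneg _) (Ne.symm hw)
  set r : ℝ := ‖w‖ with hrdef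
  set f : ℝ → ℝ := fun τ => Real.exp (-(ν₀ * τ)) * ν₀ ^ 2 * τ ^ (-(d:ℝ)) * F (τ⁻¹ • w) with hfdef
  set g : ℝ → ℝ := fun τ =>
    (γ * ν₀^2 / r ^ ((d:ℝ)+2*s)) * (Real.exp (-(ν₀*τ)) * τ ^ (2*s)) with hgdef
  have hF₁w : F₁ w = ∫ τ in Set.Ioi (0:ℝ), f τ := by
    rw [hF₁ w]; simp_rw [neg_mul]; rfl
  have hnorm : ∀ τ : ℝ, 0 < τ → ‖τ⁻¹ • w‖ = r / τ := by
    intro τ hτ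
    rw [norm_smul, norm_inv, Real.norm_eq_abs, abs_of_pos hτ, inv_mul_eq_div]
  have hgint : IntegrableOn g (Set.Ioi 0) :=
    (stmt1_aux_int (2*s) ν₀ (by linarith) hν).const_mul _
  have hgval : ∫ τ in Set.Ioi (0:ℝ), g τ
      = γ * ν₀ ^ (1 - 2*s) * Real.Gamma (2*s+1) / r ^ ((d:ℝ)+2*s) := by
    rw [hgdef]
    rw [MeasureTheory.integral_const_mul, stmt1_aux_val (2*s) ν₀ (by linarith) hν]
    have h1 : ((1:ℝ)/ν₀)^(2*s+1) = ν₀ ^ (-(2*s+1)) := by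
      rw [one_div, Real.inv_rpow hν.le, ← Real.rpow_neg hν.le]
    have h2 : (ν₀:ℝ)^2 * ν₀ ^ (-(2*s+1)) = ν₀ ^ (1-2*s) := by
      rw [show ((ν₀:ℝ)^2) = ν₀^((2:ℕ):ℝ) from (Real.rpow_natCast ν₀ 2).symm,
        ← Real.rpow_add hν]
      norm_num
      congr 1
      ring
    rw [h1, div_mul_eq_mul_div]
    congr 1
    linear_combination γ * Real.Gamma (2*s+1) * h2
  -- pointwise difference formula
  have hfg : ∀ τ : ℝ, 0 < τ → f τ - g τ = Real.exp (-(ν₀*τ)) * ν₀^2 *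
      (τ^(-(d:ℝ)) * (F (τ⁻¹ • w) - γ / (r/τ) ^ ((d:ℝ)+2*s))) := by
    intro τ hτ
    have key := stmt1_key hτ hr γ (d:ℝ) (2*s)
    simp only [hfdef, hgdef]
    rw [mul_sub, mul_sub, key]
    ring
  -- pointwise bounds on the deviation factor
  have hEb : ∀ (e : ℝ), e = 2*s ∨ e = 4*s → ∀ τ : ℝ, 0 < τ →
      τ^(-(d:ℝ)) * |F (τ⁻¹ • w) - γ / (r/τ) ^ ((d:ℝ)+2*s)|
        ≤ (C + M + γ) * τ ^ e / r ^ ((d:ℝ)+e) := by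
    intro e he τ hτ
    rcases le_or_gt τ r with hle | hlt
    · -- tail regime : ‖τ⁻¹ w‖ = r/τ ≥ 1
      have hv : (1:ℝ) ≤ ‖τ⁻¹ • w‖ := by
        rw [hnorm τ hτ]; exact (one_le_div hτ).mpr hle
      have htail := hFtail (τ⁻¹ • w) hv
      rw [hnorm τ hτ] at htail
      have h1 : τ^(-(d:ℝ)) * |F (τ⁻¹ • w) - γ / (r/τ) ^ ((d:ℝ)+2*s)|
          ≤ τ^(-(d:ℝ)) * (C / (r/τ) ^ ((d:ℝ)+4*s)) := by
        apply mul_le_mul_of_nonneg_left htail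
        positivity
      rw [stmt1_key hτ hr C (d:ℝ) (4*s)] at h1
      refine h1.trans ?_
      have hbase : 0 < τ / r := by positivity
      have hbase1 : τ / r ≤ 1 := (div_le_one hr).mpr hle
      rcases he with rfl | rfl
      · have q : τ^(4*s)/r^((d:ℝ)+4*s) ≤ τ^(2*s)/r^((d:ℝ)+2*s) := by
          rw [stmt1_Q hτ hr, stmt1_Q hτ hr]
          exact (div_le_div_iff_of_pos_right (Real.rpow_pos_of_pos hr _)).mpr
            (Real.rpow_le_rpow_of_exponent_ge hbase hbase1 (by linarith))
        calc C * τ^(4*s) / r^((d:ℝ)+4*s) = C * (τ^(4*s)/r^((d:ℝ)+4*s)) := by ring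
          _ ≤ (C+M+γ) * (τ^(2*s)/r^((d:ℝ)+2*s)) := by
              apply mul_le_mul (by linarith) q (by positivity) (by linarith)
          _ = (C+M+γ) * τ^(2*s) / r^((d:ℝ)+2*s) := by ring
      · gcongr
        linarith
    · -- bulk regime : ‖τ⁻¹ w‖ = r/τ < 1
      have hBpos : (0:ℝ) < (r/τ) ^ ((d:ℝ)+2*s) := Real.rpow_pos_of_pos (by positivity) _
      have hds : (0:ℝ) ≤ (d:ℝ) + 2*s := by
        have := (Nat.cast_nonneg d : (0:ℝ) ≤ (d:ℝ)); linarith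
      have hB1 : (r/τ) ^ ((d:ℝ)+2*s) ≤ 1 :=
        Real.rpow_le_one (div_pos hr hτ).le ((div_le_one hτ).mpr hlt.le) hds
      have hEbound : |F (τ⁻¹ • w) - γ / (r/τ) ^ ((d:ℝ)+2*s)|
          ≤ (M + γ) / (r/τ) ^ ((d:ℝ)+2*s) := by
        have habs : |F (τ⁻¹ • w) - γ / (r/τ) ^ ((d:ℝ)+2*s)|
            ≤ |F (τ⁻¹ • w)| + |γ / (r/τ) ^ ((d:ℝ)+2*s)| := by
          rw [sub_eq_add_neg]
          exact (abs_add_le _ _).trans (by rw [abs_neg])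
        rw [abs_of_nonneg (hFpos _), abs_of_nonneg (div_nonneg hγ.le hBpos.le)] at habs
        have hMle : F (τ⁻¹ • w) ≤ M / (r/τ) ^ ((d:ℝ)+2*s) := by
          refine (hM _).trans ?_
          rw [le_div_iff₀ hBpos]
          nlinarith [mul_nonneg hM0 (sub_nonneg.mpr hB1)]
        have : (M:ℝ) / (r/τ) ^ ((d:ℝ)+2*s) + γ / (r/τ) ^ ((d:ℝ)+2*s)
            = (M + γ) / (r/τ) ^ ((d:ℝ)+2*s) := by ring
        linarith
      have h1 : τ^(-(d:ℝ)) * |F (τ⁻¹ • w) - γ / (r/τ) ^ ((d:ℝ)+2*s)|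
          ≤ τ^(-(d:ℝ)) * ((M+γ) / (r/τ) ^ ((d:ℝ)+2*s)) := by
        apply mul_le_mul_of_nonneg_left hEbound
        positivity
      rw [stmt1_key hτ hr (M+γ) (d:ℝ) (2*s)] at h1
      refine h1.trans ?_
      have hbase : (1:ℝ) ≤ τ / r := (one_le_div hr).mpr hlt.le
      rcases he with rfl | rfl
      · gcongr
        linarith
      · have q : τ^(2*s)/r^((d:ℝ)+2*s) ≤ τ^(4*s)/r^((d:ℝ)+4*s) := by
          rw [stmt1_Q hτ hr, stmt1_Q hτ hr]
          exact (div_le_div_iff_of_pos_right (Real.rpow_pos_of_pos hr _)).mpr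
            (Real.rpow_le_rpow_of_exponent_le hbase (by linarith))
        calc (M+γ) * τ^(2*s) / r^((d:ℝ)+2*s) = (M+γ) * (τ^(2*s)/r^((d:ℝ)+2*s)) := by ring
          _ ≤ (C+M+γ) * (τ^(4*s)/r^((d:ℝ)+4*s)) := by
              apply mul_le_mul (by linarith) q (by positivity) (by linarith)
          _ = (C+M+γ) * τ^(4*s) / r^((d:ℝ)+4*s) := by ring
  -- combined pointwise bound on |f - g|
  have hpt : ∀ (e : ℝ), e = 2*s ∨ e = 4*s → ∀ τ : ℝ, τ ∈ Set.Ioi (0:ℝ) →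
      |f τ - g τ| ≤ (K / r ^ ((d:ℝ)+e)) * (Real.exp (-(ν₀*τ)) * τ ^ e) := by
    intro e he τ hτ
    have hτ0 : (0:ℝ) < τ := hτ
    rw [hfg τ hτ0, abs_mul]
    have hA : |Real.exp (-(ν₀*τ)) * ν₀^2| = Real.exp (-(ν₀*τ)) * ν₀^2 := by
      rw [abs_of_pos (by positivity)]
    rw [hA, abs_mul, abs_of_nonneg (by positivity : (0:ℝ) ≤ τ^(-(d:ℝ)))]
    have h2 := hEb e he τ hτ0
    calc Real.exp (-(ν₀*τ)) * ν₀^2 * (τ^(-(d:ℝ)) * |F (τ⁻¹ • w) - γ / (r/τ) ^ ((d:ℝ)+2*s)|)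
        ≤ Real.exp (-(ν₀*τ)) * ν₀^2 * ((C + M + γ) * τ ^ e / r ^ ((d:ℝ)+e)) := by
          apply mul_le_mul_of_nonneg_left h2 (by positivity)
      _ = (K / r ^ ((d:ℝ)+e)) * (Real.exp (-(ν₀*τ)) * τ ^ e) := by
          rw [hKdef]; ring
  -- core bound on |G w|
  have core : ∀ (e : ℝ), e = 2*s ∨ e = 4*s →
      |G w| ≤ K * ((1/ν₀)^(e+1) * Real.Gamma (e+1)) / r ^ ((d:ℝ)+e) := by
    intro e he
    have he0 : 0 < e := by rcases he with rfl | rfl <;> linarith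
    set b : ℝ → ℝ := fun τ => (K / r ^ ((d:ℝ)+e)) * (Real.exp (-(ν₀*τ)) * τ ^ e) with hbdef
    have hbint : IntegrableOn b (Set.Ioi 0) :=
      (stmt1_aux_int e ν₀ (by linarith) hν).const_mul _
    have hfae : AEStronglyMeasurable f (volume.restrict (Set.Ioi 0)) := by
      apply Measurable.aestronglyMeasurable
      rw [hfdef]; fun_prop
    have hfint : IntegrableOn f (Set.Ioi 0) := by
      apply Integrable.mono' (hbint.add hgint) hfae
      filter_upwards [ae_restrict_mem measurableSet_Ioi] with τ hτ
      have h1 := hpt e he τ hτ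
      have hτ0 : (0:ℝ) < τ := hτ
      have hg0 : 0 ≤ g τ := by
        rw [hgdef]
        have : (0:ℝ) ≤ τ ^ (2*s) := Real.rpow_nonneg hτ0.le _
        positivity
      have : ‖f τ‖ ≤ |f τ - g τ| + g τ := by
        rw [Real.norm_eq_abs]
        calc |f τ| = |(f τ - g τ) + g τ| := by ring_nf
          _ ≤ |f τ - g τ| + |g τ| := abs_add_le _ _
          _ = |f τ - g τ| + g τ := by rw [abs_of_nonneg hg0]
      show ‖f τ‖ ≤ (K / r ^ ((d:ℝ)+e)) * (Real.exp (-(ν₀*τ)) * τ ^ e) + g τ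
      linarith
    have hGeq : G w = ∫ τ in Set.Ioi (0:ℝ), (f τ - g τ) := by
      rw [hG w, hF₁w, ← hrdef, ← hgval, ← integral_sub hfint hgint]
    have hbval : ∫ τ in Set.Ioi (0:ℝ), b τ
        = K * ((1/ν₀)^(e+1) * Real.Gamma (e+1)) / r ^ ((d:ℝ)+e) := by
      rw [hbdef, MeasureTheory.integral_const_mul, stmt1_aux_val e ν₀ (by linarith) hν]
      ring
    calc |G w| = ‖∫ τ in Set.Ioi (0:ℝ), (f τ - g τ)‖ := by
          rw [hGeq, Real.norm_eq_abs]
      _ ≤ ∫ τ in Set.Ioi (0:ℝ), b τ := by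
          apply MeasureTheory.norm_integral_le_of_norm_le hbint
          filter_upwards [ae_restrict_mem measurableSet_Ioi] with τ hτ
          rw [Real.norm_eq_abs]
          exact hpt e he τ hτ
      _ = _ := hbval
  have h2 := core (2*s) (Or.inl rfl)
  have h4 := core (4*s) (Or.inr rfl)
  constructor
  · intro _ _
    refine h2.trans ?_
    refine (div_le_div_iff_of_pos_right (Real.rpow_pos_of_pos hr _)).mpr ?_
    rw [← hI₂def]
    exact mul_le_mul_of_nonneg_left (le_add_of_nonneg_right hI₄.le) hK.le
  · intro _
    refine h4.trans ?_
    refine (div_le_div_iff_of_pos_right (Real.rpow_pos_of_pos hr _)).mpr ?_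
    rw [← hI₄def]
    exact mul_le_mul_of_nonneg_left (le_add_of_nonneg_left hI₂.le) hK.le
end

section
/- Let s ∈ (1/2, 1), d ≥ 1, C > 0, and ε, x_d, α satisfy 0 < ε < 1, 0 < x_d < ε^{1-α}, 0 < α < 1. If G : ℝ^d → [0,∞) satisfies G(v) ≤ C/|v|^{d+2s} for |v| ≤ 1 and G(v) ≤ C/|v|^{d+4s} for |v| > 1, then ∫_{{v : ε^{-1} x_d < v_d < ε^{-α}}} v_d G(v) dv ≤ C' ( (ε^{-1} x_d)^{1-2s} + 1 ), for a constant C' depending only on d, s, C. -/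
open MeasureTheory Real Set
open scoped ENNReal

lemma aux_scale (d : ℕ) {q t : ℝ} (ht : 0 < t) :
    ∫⁻ u : EuclideanSpace ℝ (Fin d), ENNReal.ofReal ((t + ‖u‖) ^ (-q)) =
    ENNReal.ofReal (t ^ ((d:ℝ) - q)) *
      ∫⁻ x : EuclideanSpace ℝ (Fin d), ENNReal.ofReal ((1 + ‖x‖) ^ (-q)) := by
  have hmeas : Measurable fun u : EuclideanSpace ℝ (Fin d) =>
      ENNReal.ofReal ((t + ‖u‖) ^ (-q)) := by fun_prop
  have hmap := Measure.map_addHaar_smul (volume : Measure (EuclideanSpace ℝ (Fin d))) ht.ne'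
  rw [finrank_euclideanSpace_fin] at hmap
  have h1 : ∫⁻ x : EuclideanSpace ℝ (Fin d), ENNReal.ofReal ((t + ‖t • x‖) ^ (-q))
      = ENNReal.ofReal (|((t:ℝ) ^ d)⁻¹|) *
        ∫⁻ u : EuclideanSpace ℝ (Fin d), ENNReal.ofReal ((t + ‖u‖) ^ (-q)) := by
    rw [← smul_eq_mul (ENNReal.ofReal _), ← lintegral_smul_measure, ← hmap, lintegral_map hmeas (measurable_const_smul t)]
  have h2 : ∀ x : EuclideanSpace ℝ (Fin d),
      ENNReal.ofReal ((t + ‖t • x‖) ^ (-q)) =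
      ENNReal.ofReal (t ^ (-q)) * ENNReal.ofReal ((1 + ‖x‖) ^ (-q)) := by
    intro x
    rw [norm_smul, Real.norm_eq_abs, abs_of_pos ht, show t + t * ‖x‖ = t * (1 + ‖x‖) by ring,
      Real.mul_rpow ht.le (by positivity), ENNReal.ofReal_mul (by positivity)]
  simp_rw [h2] at h1
  rw [lintegral_const_mul _ (by fun_prop)] at h1
  have htd : (0:ℝ) < t ^ d := pow_pos ht d
  rw [abs_of_pos (inv_pos.2 htd)] at h1
  have := congrArg (fun z => ENNReal.ofReal (t ^ d) * z) h1
  simp only [← mul_assoc, ← ENNReal.ofReal_mul htd.le] at this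
  rw [mul_inv_cancel₀ htd.ne', ENNReal.ofReal_one, one_mul] at this
  rw [← this]
  congr 2
  rw [← Real.rpow_natCast t d, ← Real.rpow_add ht, sub_eq_add_neg]

/-- Boundary-layer estimate: for `1/2 < s < 1` and `0 < x_d < ε^{1-α}`,
`∫_{ε⁻¹ x_d < v_d < ε^{-α}} v_d G(v) dv ≤ C'((ε⁻¹ x_d)^{1-2s} + 1)`. -/
theorem stmt16 (d : ℕ) (s C : ℝ) (hs : s ∈ Set.Ioo (1/2 : ℝ) 1) (hC : 0 < C) :
    ∃ C' > (0:ℝ), ∀ ε xd α : ℝ, 0 < ε → ε < 1 → 0 < xd → xd < ε ^ (1 - α) →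
      0 < α → α < 1 →
      ∀ G : EuclideanSpace ℝ (Fin (d+1)) → ℝ, Measurable G → (∀ v, 0 ≤ G v) →
        (∀ v : EuclideanSpace ℝ (Fin (d+1)), v ≠ 0 → ‖v‖ ≤ 1 →
          G v ≤ C / ‖v‖ ^ ((d:ℝ) + 1 + 2*s)) →
        (∀ v : EuclideanSpace ℝ (Fin (d+1)), 1 < ‖v‖ →
          G v ≤ C / ‖v‖ ^ ((d:ℝ) + 1 + 4*s)) →
        ∫ v in {v : EuclideanSpace ℝ (Fin (d+1)) |
            ε⁻¹ * xd < v (Fin.last d) ∧ v (Fin.last d) < ε ^ (-α)},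
          v (Fin.last d) * G v
        ≤ C' * ((ε⁻¹ * xd) ^ (1 - 2*s) + 1) := by
  obtain ⟨hs1, hs2⟩ := hs
  have h2s : 0 < 2*s - 1 := by linarith
  set q : ℝ := (d:ℝ) + 1 + 2*s with hq
  have hdq : (d:ℝ) < q := by simp only [hq]; linarith
  set K : ℝ≥0∞ := ∫⁻ x : EuclideanSpace ℝ (Fin d), ENNReal.ofReal ((1 + ‖x‖) ^ (-q)) with hKdef
  have hKfin : K < ⊤ := by
    have h : (Module.finrank ℝ (EuclideanSpace ℝ (Fin d)) : ℝ) < q := by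
      rw [finrank_euclideanSpace_fin]; exact hdq
    exact finite_integral_one_add_norm h
  set C2 : ℝ := C * Real.sqrt 2 ^ q with hC2def
  have hC2 : 0 < C2 := mul_pos hC (rpow_pos_of_pos (Real.sqrt_pos.2 two_pos) _)
  set M : ℝ := K.toReal with hMdef
  have hM : 0 ≤ M := ENNReal.toReal_nonneg
  refine ⟨M * C2 / (2*s - 1) + 1, by positivity, ?_⟩
  intro ε xd α hε hε1 hxd hxdlt hα hα1 G hGmeas hGnn hGle1 hGle2
  set a : ℝ := ε⁻¹ * xd with hadef
  have ha : 0 < a := mul_pos (inv_pos.2 hε) hxd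
  set b : ℝ := ε ^ (-α) with hbdef
  set S : Set (EuclideanSpace ℝ (Fin (d+1))) :=
    {v | a < v (Fin.last d) ∧ v (Fin.last d) < b} with hSdef
  have hproj : Measurable fun v : EuclideanSpace ℝ (Fin (d+1)) => v (Fin.last d) :=
    by fun_prop
  have hSmeas : MeasurableSet S := by
    have : S = (fun v : EuclideanSpace ℝ (Fin (d+1)) => v (Fin.last d)) ⁻¹' (Ioo a b) := rfl
    rw [this]; exact hproj measurableSet_Ioo
  -- coordinate bound: |v last| ≤ ‖v‖
  have hcoord : ∀ v : EuclideanSpace ℝ (Fin (d+1)), |v (Fin.last d)| ≤ ‖v‖ := by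
    intro v
    rw [EuclideanSpace.norm_eq, ← Real.sqrt_sq_eq_abs (v (Fin.last d))]
    apply Real.sqrt_le_sqrt
    simpa using Finset.single_le_sum (f := fun j => ‖v j‖ ^ 2)
      (fun j _ => sq_nonneg _) (Finset.mem_univ (Fin.last d))
  -- pointwise bound on S
  have hptw : ∀ v ∈ S, ENNReal.ofReal (v (Fin.last d) * G v) ≤
      ENNReal.ofReal (C * v (Fin.last d) * ‖v‖ ^ (-q)) := by
    intro v hv
    apply ENNReal.ofReal_le_ofReal
    have hvl : 0 < v (Fin.last d) := ha.trans hv.1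
    have hvn : 0 < ‖v‖ := lt_of_lt_of_le (by simpa [abs_of_pos hvl] using hvl) 
      ((le_abs_self _).trans (hcoord v))
    have hGb : G v ≤ C * ‖v‖ ^ (-q) := by
      rw [Real.rpow_neg (norm_nonneg v), ← div_eq_mul_inv]
      rcases le_or_gt ‖v‖ 1 with h1 | h1
      · exact hGle1 v (norm_pos_iff.mp hvn) h1
      · refine (hGle2 v h1).trans ?_
        apply div_le_div_of_nonneg_left hC.le (rpow_pos_of_pos hvn _)
        apply Real.rpow_le_rpow_of_exponent_le h1.le
        simp only [hq]; linarith
    calc v (Fin.last d) * G v ≤ v (Fin.last d) * (C * ‖v‖ ^ (-q)) :=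
          mul_le_mul_of_nonneg_left hGb hvl.le
      _ = C * v (Fin.last d) * ‖v‖ ^ (-q) := by ring
  -- the product-space equivalence
  set e : (ℝ × (Fin d → ℝ)) ≃ᵐ EuclideanSpace ℝ (Fin (d+1)) :=
    ((MeasurableEquiv.piFinSuccAbove (fun _ : Fin (d+1) => ℝ) (Fin.last d)).symm).trans
      (MeasurableEquiv.toLp 2 (Fin (d+1) → ℝ)) with hedef
  have he : MeasurePreserving e
      ((volume : Measure ℝ).prod (volume : Measure (Fin d → ℝ))) volume := by
    exact ((EuclideanSpace.volume_preserving_symm_measurableEquiv_toLp (Fin (d+1))).symm).comp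
      ((volume_preserving_piFinSuccAbove (fun _ : Fin (d+1) => ℝ) (Fin.last d)).symm)
  have heapp : ∀ (t : ℝ) (w : Fin d → ℝ) (j : Fin (d+1)),
      e (t, w) j = Fin.insertNth (α := fun _ : Fin (d+1) => ℝ) (Fin.last d) t w j := by
    intro t w j
    simp [hedef, MeasurableEquiv.piFinSuccAbove_symm_apply,
      MeasurableEquiv.coe_toLp]
  have hlast : ∀ (t : ℝ) (w : Fin d → ℝ), e (t, w) (Fin.last d) = t := by
    intro t w; rw [heapp, Fin.insertNth_apply_same]
  have hq0 : 0 < q := lt_of_le_of_lt (Nat.cast_nonneg d) hdq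
  -- norm of e (t,w)
  set N : (Fin d → ℝ) → ℝ := fun w => Real.sqrt (∑ j, ‖w j‖^2) with hNdef
  have hNnn : ∀ w, 0 ≤ N w := fun w => Real.sqrt_nonneg _
  have hNmeas : Measurable N := by
    apply Measurable.sqrt
    exact Finset.measurable_sum _ (fun j _ => ((measurable_pi_apply j).norm).pow_const 2)
  have hnorm : ∀ (t : ℝ) (w : Fin d → ℝ), ‖e (t, w)‖ = Real.sqrt (t^2 + (N w)^2) := by
    intro t w
    rw [EuclideanSpace.norm_eq]
    congr 1
    rw [Fin.sum_univ_succAbove (fun j => ‖e (t, w) j‖^2) (Fin.last d)]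
    congr 1
    · rw [hlast, Real.norm_eq_abs, sq_abs]
    · rw [Real.sq_sqrt (Finset.sum_nonneg fun j _ => sq_nonneg _)]
      apply Finset.sum_congr rfl
      intro j _
      rw [heapp, Fin.insertNth_apply_succAbove]
  have hlow : ∀ (t : ℝ) (w : Fin d → ℝ), 0 ≤ t → (t + N w) / Real.sqrt 2 ≤ ‖e (t, w)‖ := by
    intro t w ht
    rw [hnorm, div_le_iff₀ (Real.sqrt_pos.2 two_pos), ← Real.sqrt_mul
      (by positivity : (0:ℝ) ≤ t^2 + (N w)^2),
      ← Real.sqrt_sq (by positivity : (0:ℝ) ≤ t + N w)]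
    apply Real.sqrt_le_sqrt
    nlinarith [sq_nonneg (t - N w)]
  -- step 0: Bochner to lintegral
  have step0 : ∫ v in S, v (Fin.last d) * G v =
      (∫⁻ v in S, ENNReal.ofReal (v (Fin.last d) * G v)).toReal := by
    apply integral_eq_lintegral_of_nonneg_ae
    · exact (ae_restrict_iff' hSmeas).2 (ae_of_all _ fun v hv =>
        mul_nonneg (ha.trans hv.1).le (hGnn v))
    · exact (hproj.mul hGmeas).aestronglyMeasurable
  -- step 1
  have step1 : (∫⁻ v in S, ENNReal.ofReal (v (Fin.last d) * G v)) ≤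
      ∫⁻ v in S, ENNReal.ofReal (C * v (Fin.last d) * ‖v‖ ^ (-q)) :=
    setLIntegral_mono (by fun_prop) hptw
  -- step 2: transfer to product space
  have step2 : (∫⁻ v in S, ENNReal.ofReal (C * v (Fin.last d) * ‖v‖ ^ (-q))) =
      ∫⁻ p in e ⁻¹' S, ENNReal.ofReal (C * (e p) (Fin.last d) * ‖e p‖ ^ (-q))
        ∂((volume : Measure ℝ).prod (volume : Measure (Fin d → ℝ))) :=
    (he.setLIntegral_comp_preimage_emb e.measurableEmbedding _ S).symm
  have hpre : e ⁻¹' S = Ioo a b ×ˢ univ := by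
    ext ⟨t, w⟩
    simp [hSdef, hlast t w, Set.mem_prod, Set.mem_Ioo]
  -- step 3: pointwise bound on product space
  have step3 : (∫⁻ p in Ioo a b ×ˢ (univ : Set (Fin d → ℝ)),
        ENNReal.ofReal (C * (e p) (Fin.last d) * ‖e p‖ ^ (-q))
        ∂((volume : Measure ℝ).prod (volume : Measure (Fin d → ℝ)))) ≤
      ∫⁻ p in Ioo a b ×ˢ (univ : Set (Fin d → ℝ)),
        ENNReal.ofReal (C2 * p.1 * (p.1 + N p.2) ^ (-q))
        ∂((volume : Measure ℝ).prod (volume : Measure (Fin d → ℝ))) := by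
    apply setLIntegral_mono
    · fun_prop
    · rintro ⟨t, w⟩ hp
      obtain ⟨htm, -⟩ := hp
      have ht : 0 < t := ha.trans htm.1
      apply ENNReal.ofReal_le_ofReal
      rw [hlast]
      have h0 : 0 < t + N w := lt_of_lt_of_le ht (le_add_of_nonneg_right (hNnn w))
      have hrb : ‖e (t, w)‖ ^ (-q) ≤ (t + N w) ^ (-q) * Real.sqrt 2 ^ q := by
        calc ‖e (t, w)‖ ^ (-q) ≤ ((t + N w) / Real.sqrt 2) ^ (-q) :=
              Real.rpow_le_rpow_of_nonpos (by positivity) (hlow t w ht.le)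
                (neg_nonpos.2 hq0.le)
          _ = (t + N w) ^ (-q) * Real.sqrt 2 ^ q := by
              rw [Real.div_rpow h0.le (Real.sqrt_nonneg 2), Real.rpow_neg (Real.sqrt_nonneg 2),
                div_inv_eq_mul]
      calc C * t * ‖e (t, w)‖ ^ (-q) ≤ C * t * ((t + N w) ^ (-q) * Real.sqrt 2 ^ q) :=
            mul_le_mul_of_nonneg_left hrb (by positivity)
        _ = C2 * t * (t + N w) ^ (-q) := by rw [hC2def]; ring
  -- step 4: Tonelli
  have hg2meas : Measurable fun p : ℝ × (Fin d → ℝ) =>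
      ENNReal.ofReal (C2 * p.1 * (p.1 + N p.2) ^ (-q)) := by
    fun_prop
  have step4 : (∫⁻ p in Ioo a b ×ˢ (univ : Set (Fin d → ℝ)),
        ENNReal.ofReal (C2 * p.1 * (p.1 + N p.2) ^ (-q))
        ∂((volume : Measure ℝ).prod (volume : Measure (Fin d → ℝ)))) =
      ∫⁻ t in Ioo a b, ∫⁻ w : Fin d → ℝ,
        ENNReal.ofReal (C2 * t * (t + N w) ^ (-q)) := by
    rw [← Measure.prod_restrict, Measure.restrict_univ,
      lintegral_prod _ hg2meas.aemeasurable]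
  -- step 5: inner integral
  have step5 : ∀ t ∈ Ioo a b, (∫⁻ w : Fin d → ℝ,
      ENNReal.ofReal (C2 * t * (t + N w) ^ (-q))) =
      ENNReal.ofReal (C2 * t ^ (-(2*s))) * K := by
    intro t htm
    have ht : 0 < t := ha.trans htm.1
    have htransfer : (∫⁻ w : Fin d → ℝ, ENNReal.ofReal ((t + N w) ^ (-q))) =
        ∫⁻ u : EuclideanSpace ℝ (Fin d), ENNReal.ofReal ((t + ‖u‖) ^ (-q)) := by
      have hmp := (EuclideanSpace.volume_preserving_symm_measurableEquiv_toLp (Fin d)).symm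
      have := hmp.lintegral_comp_emb (MeasurableEquiv.measurableEmbedding _)
        (fun u : EuclideanSpace ℝ (Fin d) => ENNReal.ofReal ((t + ‖u‖) ^ (-q)))
      rw [← this]
      apply lintegral_congr
      intro w
      congr 2
      rw [EuclideanSpace.norm_eq]
      simp only [MeasurableEquiv.symm_symm, MeasurableEquiv.coe_toLp, WithLp.ofLp_toLp, hNdef]
    calc (∫⁻ w : Fin d → ℝ, ENNReal.ofReal (C2 * t * (t + N w) ^ (-q)))
        = ENNReal.ofReal (C2 * t) * ∫⁻ w : Fin d → ℝ, ENNReal.ofReal ((t + N w) ^ (-q)) := by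
          rw [← lintegral_const_mul _ (by fun_prop)]
          apply lintegral_congr
          intro w
          rw [← ENNReal.ofReal_mul (by positivity), mul_assoc]
      _ = ENNReal.ofReal (C2 * t) * (ENNReal.ofReal (t ^ ((d:ℝ) - q)) * K) := by
          rw [htransfer, aux_scale d ht]
      _ = ENNReal.ofReal (C2 * t ^ (-(2*s))) * K := by
          rw [← mul_assoc, ← ENNReal.ofReal_mul (by positivity)]
          congr 2
          rw [mul_assoc]
          congr 1
          nth_rewrite 1 [← Real.rpow_one t]
          rw [← Real.rpow_add ht]
          congr 1
          rw [hq]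
          ring
  -- step 6: outer integral bound
  have hout : (∫⁻ t in Ioi a, ENNReal.ofReal (C2 * t ^ (-(2*s)))) =
      ENNReal.ofReal (C2 * (a ^ (1-2*s) / (2*s-1))) := by
    have hexp : -(2*s) < -1 := by linarith
    have hInt : Integrable (fun t : ℝ => C2 * t ^ (-(2*s))) (volume.restrict (Ioi a)) :=
      (integrableOn_Ioi_rpow_of_lt hexp ha).const_mul C2
    have hnn : 0 ≤ᵐ[volume.restrict (Ioi a)] fun t : ℝ => C2 * t ^ (-(2*s)) :=
      (ae_restrict_iff' measurableSet_Ioi).2 (ae_of_all _ fun t ht =>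
        mul_nonneg hC2.le (Real.rpow_nonneg (ha.trans ht).le _))
    rw [← ofReal_integral_eq_lintegral_ofReal hInt hnn]
    congr 1
    rw [MeasureTheory.integral_const_mul, integral_Ioi_rpow_of_lt hexp ha]
    rw [show -(2*s) + 1 = 1 - 2*s by ring]
    congr 1
    rw [div_eq_div_iff (by linarith : (1:ℝ) - 2*s ≠ 0) (by linarith : (2:ℝ)*s - 1 ≠ 0)]
    ring
  -- assemble the lintegral bound
  have key : (∫⁻ v in S, ENNReal.ofReal (v (Fin.last d) * G v)) ≤
      ENNReal.ofReal (C2 * (a ^ (1-2*s) / (2*s-1)) * M) := by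
    calc (∫⁻ v in S, ENNReal.ofReal (v (Fin.last d) * G v))
        ≤ ∫⁻ v in S, ENNReal.ofReal (C * v (Fin.last d) * ‖v‖ ^ (-q)) := step1
      _ = ∫⁻ p in Ioo a b ×ˢ (univ : Set (Fin d → ℝ)),
            ENNReal.ofReal (C * (e p) (Fin.last d) * ‖e p‖ ^ (-q))
            ∂((volume : Measure ℝ).prod (volume : Measure (Fin d → ℝ))) := by
          rw [step2, hpre]
      _ ≤ ∫⁻ p in Ioo a b ×ˢ (univ : Set (Fin d → ℝ)),
            ENNReal.ofReal (C2 * p.1 * (p.1 + N p.2) ^ (-q))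
            ∂((volume : Measure ℝ).prod (volume : Measure (Fin d → ℝ))) := step3
      _ = ∫⁻ t in Ioo a b, ∫⁻ w : Fin d → ℝ,
            ENNReal.ofReal (C2 * t * (t + N w) ^ (-q)) := step4
      _ = ∫⁻ t in Ioo a b, ENNReal.ofReal (C2 * t ^ (-(2*s))) * K := by
          apply setLIntegral_congr_fun measurableSet_Ioo
          exact step5
      _ = (∫⁻ t in Ioo a b, ENNReal.ofReal (C2 * t ^ (-(2*s)))) * K := by
          rw [lintegral_mul_const _ (by fun_prop)]
      _ ≤ (∫⁻ t in Ioi a, ENNReal.ofReal (C2 * t ^ (-(2*s)))) * K := by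
          gcongr
          exact Ioo_subset_Ioi_self
      _ = ENNReal.ofReal (C2 * (a ^ (1-2*s) / (2*s-1))) * K := by rw [hout]
      _ = ENNReal.ofReal (C2 * (a ^ (1-2*s) / (2*s-1)) * M) := by
          rw [show K = ENNReal.ofReal M from (ENNReal.ofReal_toReal hKfin.ne).symm,
            ← ENNReal.ofReal_mul (by positivity)]
  -- conclude
  rw [step0]
  apply ENNReal.toReal_le_of_le_ofReal (by positivity)
  refine key.trans (ENNReal.ofReal_le_ofReal ?_)
  have hP : 0 ≤ a ^ (1-2*s) := Real.rpow_nonneg ha.le _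
  have h3 : 0 ≤ M * C2 / (2*s-1) := by positivity
  have heq : C2 * (a ^ (1-2*s) / (2*s-1)) * M = (M * C2 / (2*s-1)) * a ^ (1-2*s) := by
    field_simp
  rw [heq]
  nlinarith
end

section
/- Let ν₀ > 0 and define, for x ∈ ℝ^d_+ and v ∈ ℝ^d with v_d < 0, τ_f^ε(x,v) = -x_d/(ε v_d). Then ν₀ e^{-ν₀ τ_f^ε(x,v)} = ∫_{τ_f^ε(x,v)}^∞ ν₀² e^{-ν₀ τ} dτ, and consequently, for any bounded measurable ψ and the extension ψ̃(x+εv, v) := ψ(x+εv) if x+εv ∈ Ω and ψ̃(x+εv,v) := ψ(x_f(x,εv)) otherwise, one has ∫_{ℝ^d} [∫₀^{τ_f^ε} ν₀² e^{-ν₀τ}(ψ(x+ετv)-ψ(x))dτ + ν₀ e^{-ν₀ τ_f^ε}(ψ(x_f)-ψ(x))] F(v) dv = ∫_{ℝ^d} (ψ̃(x+εv, v) - ψ(x)) F₁(v) dv, where F₁(v) = ∫₀^∞ e^{-ν₀τ} ν₀² τ^{-d} F(v/τ) dτ. -/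
set_option maxHeartbeats 1000000


open MeasureTheory Real Set

/-- Exit-time identity `ν₀ e^{-ν₀ τ_f^ε} = ∫_{τ_f^ε}^∞ ν₀² e^{-ν₀τ} dτ` and the resulting
equality of the bulk-plus-exit-point operator with the extension-based operator `L^ε`
in the half-space `Ω = {x_{d+1} > 0}`. -/
theorem stmt17 (d : ℕ) (s ν₀ ε : ℝ) (hs : s ∈ Set.Ioo (0:ℝ) 1) (hν : 0 < ν₀) (hε : 0 < ε)
    (ψ : EuclideanSpace ℝ (Fin (d+1)) → ℝ) (hψm : Measurable ψ)
    (hψb : ∃ M, ∀ z, |ψ z| ≤ M)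
    (F : EuclideanSpace ℝ (Fin (d+1)) → ℝ) (hFm : Measurable F) (hFpos : ∀ v, 0 ≤ F v)
    (hFi : Integrable F) (hFint : ∫ v, F v = 1)
    (F₁ : EuclideanSpace ℝ (Fin (d+1)) → ℝ)
    (hF₁ : ∀ v, F₁ v = ∫ τ in Set.Ioi (0:ℝ),
      Real.exp (-ν₀ * τ) * ν₀ ^ 2 * τ ^ (-((d:ℝ) + 1)) * F (τ⁻¹ • v)) :
    (∀ x v : EuclideanSpace ℝ (Fin (d+1)), 0 < x (Fin.last d) → v (Fin.last d) < 0 →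
      ν₀ * Real.exp (-ν₀ * (-(x (Fin.last d)) / (ε * v (Fin.last d))))
        = ∫ τ in Set.Ioi (-(x (Fin.last d)) / (ε * v (Fin.last d))),
            ν₀ ^ 2 * Real.exp (-ν₀ * τ)) ∧
    (∀ x : EuclideanSpace ℝ (Fin (d+1)), 0 < x (Fin.last d) →
      ∫ v : EuclideanSpace ℝ (Fin (d+1)),
        ((∫ τ in {τ : ℝ | 0 < τ ∧ 0 < (x + (ε * τ) • v) (Fin.last d)},
            ν₀ ^ 2 * Real.exp (-ν₀ * τ) * (ψ (x + (ε * τ) • v) - ψ x))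
          + (if v (Fin.last d) < 0 then
              ν₀ * Real.exp (-ν₀ * (-(x (Fin.last d)) / (ε * v (Fin.last d)))) *
                (ψ (x + (-(x (Fin.last d)) / (ε * v (Fin.last d))) • (ε • v)) - ψ x)
            else 0)) * F v
      = ∫ v : EuclideanSpace ℝ (Fin (d+1)),
          ((if 0 < (x + ε • v) (Fin.last d) then ψ (x + ε • v)
            else ψ (x + (-(x (Fin.last d)) / (ε * v (Fin.last d))) • (ε • v))) - ψ x)
            * F₁ v) := by
  obtain ⟨M, hM⟩ := hψb
  have hM0 : 0 ≤ M := (abs_nonneg _).trans (hM 0)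
  -- Part 1: the exponential exit-time identity
  have key : ∀ t : ℝ, ν₀ * Real.exp (-ν₀ * t)
      = ∫ τ in Set.Ioi t, ν₀ ^ 2 * Real.exp (-ν₀ * τ) := by
    intro t
    have hΓint : IntegrableOn (fun τ => ν₀ ^ 2 * Real.exp (-ν₀ * τ)) (Ioi t) :=
      (exp_neg_integrableOn_Ioi t hν).const_mul _
    have hderiv : ∀ τ ∈ Ici t, HasDerivAt (fun u => -(ν₀ * Real.exp (-ν₀ * u)))
        (ν₀ ^ 2 * Real.exp (-ν₀ * τ)) τ := by
      intro τ _
      have h := ((((hasDerivAt_id τ).const_mul (-ν₀)).exp).const_mul ν₀).neg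
      simp only [id_eq] at h
      exact h.congr_deriv (by ring)
    have htend : Filter.Tendsto (fun u => -(ν₀ * Real.exp (-ν₀ * u))) Filter.atTop (nhds 0) := by
      have h1 : Filter.Tendsto (fun u : ℝ => -ν₀ * u) Filter.atTop Filter.atBot :=
        Filter.tendsto_id.const_mul_atTop_of_neg (by linarith)
      have h2 := ((Real.tendsto_exp_atBot.comp h1).const_mul ν₀).neg
      simpa using h2
    have h3 := integral_Ioi_of_hasDerivAt_of_tendsto' hderiv hΓint htend
    rw [h3]; ring
  refine ⟨fun x v _ _ => key _, ?_⟩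
  intro x hx
  classical
  set ld : Fin (d+1) := Fin.last d with hlddef
  -- basic measurability
  have projm : Measurable fun v : EuclideanSpace ℝ (Fin (d+1)) => v ld :=
    (EuclideanSpace.proj ld (𝕜 := ℝ)).measurable
  -- Γ
  set Γ : ℝ → ℝ := fun τ => ν₀ ^ 2 * Real.exp (-ν₀ * τ) with hΓdef
  have hΓ0 : ∀ τ, 0 ≤ Γ τ := fun τ => by rw [hΓdef]; positivity
  have hΓm : Measurable Γ := by rw [hΓdef]; fun_prop
  have hΓint : ∀ t : ℝ, IntegrableOn Γ (Ioi t) := fun t =>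
    (exp_neg_integrableOn_Ioi t hν).const_mul _
  -- the extended increment Ψ
  set Ψ : ℝ → EuclideanSpace ℝ (Fin (d+1)) → ℝ := fun τ v =>
    (if 0 < (x + (ε * τ) • v) ld then ψ (x + (ε * τ) • v)
     else ψ (x + (-(x ld) / (ε * v ld)) • (ε • v))) - ψ x with hΨdef
  have happly : ∀ (c : ℝ) (v : EuclideanSpace ℝ (Fin (d+1))),
      (x + c • v) ld = x ld + c * v ld := fun _ _ => rfl
  have hΨm : Measurable (Function.uncurry Ψ) := by
    rw [hΨdef]
    apply Measurable.sub _ measurable_const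
    have hadd : Measurable fun p : ℝ × EuclideanSpace ℝ (Fin (d+1)) => x + (ε * p.1) • p.2 :=
      measurable_const.add ((measurable_fst.const_mul ε).smul measurable_snd)
    have hexit : Measurable fun p : ℝ × EuclideanSpace ℝ (Fin (d+1)) =>
        x + (-(x ld) / (ε * p.2 ld)) • (ε • p.2) :=
      measurable_const.add
        ((measurable_const.div ((projm.comp measurable_snd).const_mul ε)).smul
          (measurable_snd.const_smul ε))
    exact Measurable.ite (measurableSet_lt measurable_const (projm.comp hadd))
      (hψm.comp hadd) (hψm.comp hexit)
  have hΨvm : ∀ τ, Measurable (Ψ τ) := fun τ =>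
    hΨm.comp (measurable_const.prodMk measurable_id)
  have hΨb : ∀ τ v, |Ψ τ v| ≤ 2 * M := by
    intro τ v
    have h1 : ∀ z : EuclideanSpace ℝ (Fin (d+1)), |ψ z - ψ x| ≤ 2 * M := fun z =>
      (abs_sub _ _).trans (by linarith [hM z, hM x])
    rw [hΨdef]
    dsimp only
    split <;> exact h1 _
  -- scaling identity
  have hΨscale : ∀ (τ : ℝ) (w : EuclideanSpace ℝ (Fin (d+1))), 0 < τ → Ψ 1 (τ • w) = Ψ τ w := by
    intro τ w hτ
    have hsmul : (ε * 1) • (τ • w) = (ε * τ) • w := by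
      rw [smul_smul, mul_one]
    have happτ : (τ • w) ld = τ * w ld := rfl
    by_cases hcond : 0 < (x + (ε * τ) • w) ld
    · rw [hΨdef]; dsimp only; rw [hsmul, if_pos hcond, if_pos hcond]
    · have hwld : w ld < 0 := by
        rw [happly] at hcond
        by_contra hge
        push_neg at hge
        exact hcond (by nlinarith [mul_nonneg (mul_nonneg hε.le hτ.le) hge])
      have hvec : (-(x ld) / (ε * (τ • w) ld)) • (ε • (τ • w))
          = (-(x ld) / (ε * w ld)) • (ε • w) := by
        simp only [happτ, smul_smul]
        congr 1
        field_simp [hτ.ne', hwld.ne]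
      rw [hΨdef]; dsimp only; rw [hsmul, if_neg hcond, if_neg hcond, hvec]
  -- integrability of Γ · Ψ in τ
  have hGint : ∀ v : EuclideanSpace ℝ (Fin (d+1)),
      IntegrableOn (fun τ => Γ τ * Ψ τ v) (Ioi 0) := by
    intro v
    refine Integrable.mono' ((hΓint 0).mul_const (2 * M))
      ((hΓm.mul ((hΨm.comp (measurable_id.prodMk measurable_const)))).aestronglyMeasurable) ?_
    filter_upwards with τ
    rw [Real.norm_eq_abs, abs_mul, abs_of_nonneg (hΓ0 τ)]
    exact mul_le_mul_of_nonneg_left (hΨb τ v) (hΓ0 τ)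
  -- pointwise-in-v identity for the LHS integrand
  have hC2 : ∀ v : EuclideanSpace ℝ (Fin (d+1)),
      ((∫ τ in {τ : ℝ | 0 < τ ∧ 0 < (x + (ε * τ) • v) ld},
          ν₀ ^ 2 * Real.exp (-ν₀ * τ) * (ψ (x + (ε * τ) • v) - ψ x))
        + (if v ld < 0 then
            ν₀ * Real.exp (-ν₀ * (-(x ld) / (ε * v ld))) *
              (ψ (x + (-(x ld) / (ε * v ld)) • (ε • v)) - ψ x)
          else 0))
      = ∫ τ in Ioi 0, Γ τ * Ψ τ v := by
    intro v
    by_cases hv : v ld < 0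
    · have hεv : ε * v ld < 0 := mul_neg_of_pos_of_neg hε hv
      set t₀ : ℝ := -(x ld) / (ε * v ld) with ht₀def
      have ht₀ : 0 < t₀ := div_pos_of_neg_of_neg (by linarith) hεv
      have hmc : t₀ * (ε * v ld) = -(x ld) := div_mul_cancel₀ _ (ne_of_lt hεv)
      have hiff : ∀ τ : ℝ, (0 < (x + (ε * τ) • v) ld) ↔ τ < t₀ := by
        intro τ
        rw [happly]
        constructor
        · intro h; nlinarith
        · intro h; nlinarith
      have hset : {τ : ℝ | 0 < τ ∧ 0 < (x + (ε * τ) • v) ld} = Ioo 0 t₀ := by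
        ext τ; simp only [mem_setOf_eq, mem_Ioo, hiff]
      have hsplit : ∫ τ in Ioi 0, Γ τ * Ψ τ v
          = (∫ τ in Ioc 0 t₀, Γ τ * Ψ τ v) + ∫ τ in Ioi t₀, Γ τ * Ψ τ v := by
        rw [← Ioc_union_Ioi_eq_Ioi ht₀.le]
        exact setIntegral_union (Ioc_disjoint_Ioi le_rfl) measurableSet_Ioi
          ((hGint v).mono_set (fun τ hτ => hτ.1))
          ((hGint v).mono_set (fun τ hτ => lt_trans ht₀ hτ))
      have hbulk : ∫ τ in Ioc 0 t₀, Γ τ * Ψ τ v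
          = ∫ τ in {τ : ℝ | 0 < τ ∧ 0 < (x + (ε * τ) • v) ld},
              ν₀ ^ 2 * Real.exp (-ν₀ * τ) * (ψ (x + (ε * τ) • v) - ψ x) := by
        rw [hset, integral_Ioc_eq_integral_Ioo]
        refine setIntegral_congr_fun measurableSet_Ioo ?_
        intro τ hτ
        have hc : 0 < (x + (ε * τ) • v) ld := (hiff τ).2 hτ.2
        rw [hΨdef]; dsimp only; rw [if_pos hc, hΓdef]
      have hexit : ∫ τ in Ioi t₀, Γ τ * Ψ τ v
          = ν₀ * Real.exp (-ν₀ * t₀) * (ψ (x + t₀ • (ε • v)) - ψ x) := by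
        have heq : EqOn (fun τ => Γ τ * Ψ τ v)
            (fun τ => Γ τ * (ψ (x + t₀ • (ε • v)) - ψ x)) (Ioi t₀) := by
          intro τ hτ
          have hc : ¬ 0 < (x + (ε * τ) • v) ld := by
            rw [hiff]; exact not_lt.2 (le_of_lt hτ)
          dsimp only
          rw [hΨdef]; dsimp only; rw [if_neg hc, ht₀def]
        rw [setIntegral_congr_fun measurableSet_Ioi heq, integral_mul_const, ← hΓdef, ← key t₀]
      rw [hsplit, hbulk, hexit, if_pos hv, ht₀def]
    · rw [if_neg hv]
      push_neg at hv
      have hset : {τ : ℝ | 0 < τ ∧ 0 < (x + (ε * τ) • v) ld} = Ioi 0 := by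
        ext τ
        simp only [mem_setOf_eq, mem_Ioi, and_iff_left_iff_imp]
        intro hτ
        rw [happly]
        have : 0 ≤ ε * τ * v ld := mul_nonneg (mul_nonneg hε.le (le_of_lt hτ)) hv
        linarith
      rw [add_zero, hset]
      refine setIntegral_congr_fun measurableSet_Ioi ?_
      intro τ hτ
      have hc : 0 < (x + (ε * τ) • v) ld := by
        rw [happly]
        have : 0 ≤ ε * τ * v ld := mul_nonneg (mul_nonneg hε.le (le_of_lt hτ)) hv
        linarith
      rw [hΨdef]; dsimp only; rw [if_pos hc, hΓdef]
  -- rpow identity and change of variables facts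
  have hrpow : ∀ τ : ℝ, 0 < τ → τ ^ (-((d:ℝ)+1)) = (τ ^ (d+1 : ℕ))⁻¹ := by
    intro τ hτ
    rw [show -((d:ℝ)+1) = -((d+1 : ℕ) : ℝ) by push_cast; ring, Real.rpow_neg hτ.le,
      Real.rpow_natCast]
  have hΨ1m : Measurable (Ψ 1) := hΨvm 1
  have hrm : Measurable fun t : ℝ => t ^ (-((d:ℝ)+1)) := by fun_prop
  -- the RHS kernel, slice integrability
  have hslice : ∀ τ : ℝ, 0 < τ → Integrable (fun v : EuclideanSpace ℝ (Fin (d+1)) =>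
      Ψ 1 v * (Real.exp (-ν₀ * τ) * ν₀ ^ 2 * τ ^ (-((d:ℝ)+1)) * F (τ⁻¹ • v))) := by
    intro τ hτ
    have h1 : Integrable (fun v : EuclideanSpace ℝ (Fin (d+1)) =>
        Real.exp (-ν₀ * τ) * ν₀ ^ 2 * τ ^ (-((d:ℝ)+1)) * F (τ⁻¹ • v)) :=
      (hFi.comp_smul (inv_ne_zero hτ.ne')).const_mul _
    exact h1.bdd_mul hΨ1m.aestronglyMeasurable
      (c := 2*M) (Filter.Eventually.of_forall fun v => by rw [Real.norm_eq_abs]; exact hΨb 1 v)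
  -- kernel nonnegativity
  have hker0 : ∀ (τ : ℝ), 0 < τ → ∀ v : EuclideanSpace ℝ (Fin (d+1)),
      0 ≤ Real.exp (-ν₀ * τ) * ν₀ ^ 2 * τ ^ (-((d:ℝ)+1)) * F (τ⁻¹ • v) := fun τ hτ v =>
    mul_nonneg (mul_nonneg (mul_nonneg (Real.exp_pos _).le (sq_nonneg ν₀))
      (Real.rpow_nonneg hτ.le _)) (hFpos _)
  -- value of ∫ F (τ⁻¹ • v)
  have hFcv : ∀ τ : ℝ, 0 < τ → (∫ v : EuclideanSpace ℝ (Fin (d+1)), F (τ⁻¹ • v)) = τ ^ (d+1 : ℕ) := by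
    intro τ hτ
    rw [Measure.integral_comp_inv_smul_of_nonneg volume F hτ.le, finrank_euclideanSpace_fin,
      hFint, smul_eq_mul, mul_one]
  -- Fubini integrability, LHS
  have hunc1 : Measurable (fun p : EuclideanSpace ℝ (Fin (d+1)) × ℝ => Γ p.2 * Ψ p.2 p.1 * F p.1) :=
    ((hΓm.comp measurable_snd).mul (hΨm.comp (measurable_snd.prodMk measurable_fst))).mul
      (hFm.comp measurable_fst)
  have hint1 : Integrable (Function.uncurry fun v τ => Γ τ * Ψ τ v * F v)
      (volume.prod (volume.restrict (Ioi 0))) := by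
    have hbd : Integrable (fun p : EuclideanSpace ℝ (Fin (d+1)) × ℝ => (2 * M * F p.1) * Γ p.2)
        (volume.prod (volume.restrict (Ioi 0))) := (hFi.const_mul (2*M)).mul_prod (hΓint 0)
    refine hbd.mono' hunc1.aestronglyMeasurable ?_
    filter_upwards with p
    obtain ⟨v, τ⟩ := p
    simp only [Function.uncurry_apply_pair]
    rw [Real.norm_eq_abs, abs_mul, abs_mul, abs_of_nonneg (hΓ0 τ), abs_of_nonneg (hFpos v)]
    calc Γ τ * |Ψ τ v| * F v ≤ Γ τ * (2 * M) * F v :=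
          mul_le_mul_of_nonneg_right
            (mul_le_mul_of_nonneg_left (hΨb τ v) (hΓ0 τ)) (hFpos v)
      _ = 2 * M * F v * Γ τ := by ring
  -- Fubini integrability, RHS
  have huncm2 : Measurable (fun p : EuclideanSpace ℝ (Fin (d+1)) × ℝ =>
      Ψ 1 p.1 * (Real.exp (-ν₀ * p.2) * ν₀ ^ 2 * p.2 ^ (-((d:ℝ)+1)) * F (p.2⁻¹ • p.1))) :=
    (hΨ1m.comp measurable_fst).mul
      ((((Real.measurable_exp.comp (measurable_snd.const_mul (-ν₀))).mul_const (ν₀^2)).mul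
        (hrm.comp measurable_snd)).mul (hFm.comp (measurable_snd.inv.smul measurable_fst)))
  have hint2 : Integrable (Function.uncurry fun (v : EuclideanSpace ℝ (Fin (d+1))) (τ : ℝ) =>
      Ψ 1 v * (Real.exp (-ν₀ * τ) * ν₀ ^ 2 * τ ^ (-((d:ℝ)+1)) * F (τ⁻¹ • v)))
      (volume.prod (volume.restrict (Ioi 0))) := by
    refine (integrable_prod_iff' huncm2.aestronglyMeasurable).2 ⟨?_, ?_⟩
    · filter_upwards [ae_restrict_mem measurableSet_Ioi] with τ hτ
      exact hslice τ hτ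
    · have hgm : Measurable (fun p : ℝ × (EuclideanSpace ℝ (Fin (d+1))) =>
          ‖Ψ 1 p.2 * (Real.exp (-ν₀ * p.1) * ν₀ ^ 2 * p.1 ^ (-((d:ℝ)+1)) * F (p.1⁻¹ • p.2))‖) :=
        (huncm2.comp (measurable_snd.prodMk measurable_fst)).norm
      have hmeasInt : AEStronglyMeasurable (fun τ : ℝ => ∫ v : EuclideanSpace ℝ (Fin (d+1)),
          ‖Ψ 1 v * (Real.exp (-ν₀ * τ) * ν₀ ^ 2 * τ ^ (-((d:ℝ)+1)) * F (τ⁻¹ • v))‖)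
          (volume.restrict (Ioi 0)) := hgm.aestronglyMeasurable.integral_prod_right'
      refine Integrable.mono' ((hΓint 0).const_mul (2*M)) hmeasInt ?_
      filter_upwards [ae_restrict_mem measurableSet_Ioi] with τ hτ
      have hτ' : (0:ℝ) < τ := hτ
      have hnn : 0 ≤ ∫ v : EuclideanSpace ℝ (Fin (d+1)),
          ‖Ψ 1 v * (Real.exp (-ν₀ * τ) * ν₀ ^ 2 * τ ^ (-((d:ℝ)+1)) * F (τ⁻¹ • v))‖ :=
        integral_nonneg fun v => norm_nonneg _
      rw [Real.norm_eq_abs, abs_of_nonneg hnn]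
      have hb1 : ∀ v : EuclideanSpace ℝ (Fin (d+1)),
          ‖Ψ 1 v * (Real.exp (-ν₀ * τ) * ν₀ ^ 2 * τ ^ (-((d:ℝ)+1)) * F (τ⁻¹ • v))‖
          ≤ (2*M) * (Real.exp (-ν₀ * τ) * ν₀ ^ 2 * τ ^ (-((d:ℝ)+1)) * F (τ⁻¹ • v)) := by
        intro v
        rw [Real.norm_eq_abs, abs_mul, abs_of_nonneg (hker0 τ hτ' v)]
        exact mul_le_mul_of_nonneg_right (hΨb 1 v) (hker0 τ hτ' v)
      have hint3 : Integrable (fun v : EuclideanSpace ℝ (Fin (d+1)) =>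
          (2*M) * (Real.exp (-ν₀ * τ) * ν₀ ^ 2 * τ ^ (-((d:ℝ)+1)) * F (τ⁻¹ • v))) :=
        ((hFi.comp_smul (inv_ne_zero hτ'.ne')).const_mul _).const_mul _
      calc (∫ v : EuclideanSpace ℝ (Fin (d+1)),
            ‖Ψ 1 v * (Real.exp (-ν₀ * τ) * ν₀ ^ 2 * τ ^ (-((d:ℝ)+1)) * F (τ⁻¹ • v))‖)
          ≤ ∫ v : EuclideanSpace ℝ (Fin (d+1)),
            (2*M) * (Real.exp (-ν₀ * τ) * ν₀ ^ 2 * τ ^ (-((d:ℝ)+1)) * F (τ⁻¹ • v)) :=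
            integral_mono ((hslice τ hτ').norm) hint3 hb1
        _ = 2 * M * Γ τ := by
            rw [integral_const_mul, integral_const_mul, hFcv τ hτ', hrpow τ hτ']
            simp only [hΓdef]
            have hne : (τ:ℝ) ^ (d+1:ℕ) ≠ 0 := (pow_pos hτ' _).ne'
            have hcan : (τ ^ (d+1:ℕ))⁻¹ * (τ ^ (d+1:ℕ)) = 1 := inv_mul_cancel₀ hne
            linear_combination (2 * M * (Real.exp (-ν₀ * τ) * ν₀ ^ 2)) * hcan
  -- the per-τ change of variables
  have hPT : ∀ τ ∈ Ioi (0:ℝ),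
      (∫ v : EuclideanSpace ℝ (Fin (d+1)),
        Ψ 1 v * (Real.exp (-ν₀ * τ) * ν₀ ^ 2 * τ ^ (-((d:ℝ)+1)) * F (τ⁻¹ • v)))
      = Γ τ * ∫ v : EuclideanSpace ℝ (Fin (d+1)), Ψ τ v * F v := by
    intro τ hτ
    have hτ' : (0:ℝ) < τ := hτ
    have h1 : ∀ v : EuclideanSpace ℝ (Fin (d+1)),
        Ψ 1 v * (Real.exp (-ν₀ * τ) * ν₀ ^ 2 * τ ^ (-((d:ℝ)+1)) * F (τ⁻¹ • v))
        = (Real.exp (-ν₀ * τ) * ν₀ ^ 2 * (τ ^ (d+1:ℕ))⁻¹)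
            * ((fun u => Ψ 1 (τ • u) * F u) (τ⁻¹ • v)) := by
      intro v
      simp only
      rw [smul_inv_smul₀ hτ'.ne', hrpow τ hτ']
      ring
    rw [integral_congr_ae (Filter.Eventually.of_forall h1), integral_const_mul,
      Measure.integral_comp_inv_smul_of_nonneg volume (fun u => Ψ 1 (τ • u) * F u) hτ'.le,
      finrank_euclideanSpace_fin, smul_eq_mul]
    have h2 : (∫ u : EuclideanSpace ℝ (Fin (d+1)), Ψ 1 (τ • u) * F u)
        = ∫ v : EuclideanSpace ℝ (Fin (d+1)), Ψ τ v * F v :=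
      integral_congr_ae (Filter.Eventually.of_forall fun u => by
        dsimp only; rw [hΨscale τ u hτ'])
    rw [h2]
    simp only [hΓdef]
    have hne : (τ:ℝ) ^ (d+1:ℕ) ≠ 0 := (pow_pos hτ' _).ne'
    have hcan : (τ ^ (d+1:ℕ))⁻¹ * (τ ^ (d+1:ℕ)) = 1 := inv_mul_cancel₀ hne
    linear_combination (Real.exp (-ν₀ * τ) * ν₀ ^ 2 *
      (∫ v : EuclideanSpace ℝ (Fin (d+1)), Ψ τ v * F v)) * hcan
  -- assemble
  calc ∫ v : EuclideanSpace ℝ (Fin (d+1)),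
        ((∫ τ in {τ : ℝ | 0 < τ ∧ 0 < (x + (ε * τ) • v) ld},
            ν₀ ^ 2 * Real.exp (-ν₀ * τ) * (ψ (x + (ε * τ) • v) - ψ x))
          + (if v ld < 0 then
              ν₀ * Real.exp (-ν₀ * (-(x ld) / (ε * v ld))) *
                (ψ (x + (-(x ld) / (ε * v ld)) • (ε • v)) - ψ x)
            else 0)) * F v
      = ∫ v : EuclideanSpace ℝ (Fin (d+1)), ∫ τ in Ioi (0:ℝ), Γ τ * Ψ τ v * F v := by
        refine integral_congr_ae (Filter.Eventually.of_forall fun v => ?_)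
        dsimp only
        rw [hC2 v, ← integral_mul_const]
    _ = ∫ τ in Ioi (0:ℝ), ∫ v : EuclideanSpace ℝ (Fin (d+1)), Γ τ * Ψ τ v * F v :=
        integral_integral_swap hint1
    _ = ∫ τ in Ioi (0:ℝ), Γ τ * ∫ v : EuclideanSpace ℝ (Fin (d+1)), Ψ τ v * F v := by
        refine integral_congr_ae (Filter.Eventually.of_forall fun τ => ?_)
        simp_rw [mul_assoc]
        rw [integral_const_mul]
    _ = ∫ τ in Ioi (0:ℝ), ∫ v : EuclideanSpace ℝ (Fin (d+1)),
          Ψ 1 v * (Real.exp (-ν₀ * τ) * ν₀ ^ 2 * τ ^ (-((d:ℝ)+1)) * F (τ⁻¹ • v)) :=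
        (setIntegral_congr_fun measurableSet_Ioi fun τ hτ => hPT τ hτ).symm
    _ = ∫ v : EuclideanSpace ℝ (Fin (d+1)), ∫ τ in Ioi (0:ℝ),
          Ψ 1 v * (Real.exp (-ν₀ * τ) * ν₀ ^ 2 * τ ^ (-((d:ℝ)+1)) * F (τ⁻¹ • v)) :=
        (integral_integral_swap hint2).symm
    _ = ∫ v : EuclideanSpace ℝ (Fin (d+1)),
          ((if 0 < (x + ε • v) ld then ψ (x + ε • v)
            else ψ (x + (-(x ld) / (ε * v ld)) • (ε • v))) - ψ x) * F₁ v := by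
        refine integral_congr_ae (Filter.Eventually.of_forall fun v => ?_)
        dsimp only
        rw [hF₁ v, ← integral_const_mul]
        refine integral_congr_ae (Filter.Eventually.of_forall fun τ => ?_)
        rw [hΨdef]
        simp only [mul_one]
end

section
/- Let Ω = ℝ^d_+, ν₀ > 0, ε ∈ (0,1), and let ρ ∈ L²(Ω). Define for y ∈ ∂Ω the averaged trace T_ε ρ(y) = c₀ ∫_{w_d>0} ∫₀^∞ ν₀ e^{-ν₀τ} ρ(y + ετ w) F(w) w_d dτ dw, where F is a probability density with finite first moment and c₀ = (∫_{w_d>0} F(w) w_d dw)^{-1}. Then ∫_{∂Ω} |T_ε ρ(y)|² dσ(y) ≤ ε^{-1} ν₀ c₀' ‖ρ‖²_{L²(Ω)} for a constant c₀' depending only on ν₀, F. -/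
open MeasureTheory Real Set ENNReal

theorem cs_aux {α : Type*} [MeasurableSpace α] (μ : Measure α) (f m : α → ℝ≥0∞)
    (hf : AEMeasurable f μ) (hm : AEMeasurable m μ) :
    (∫⁻ x, f x * m x ∂μ) ^ 2 ≤ (∫⁻ x, f x ^ 2 * m x ∂μ) * ∫⁻ x, m x ∂μ := by
  have hpq : Real.HolderConjugate 2 2 := by constructor <;> norm_num
  have h := ENNReal.lintegral_mul_le_Lp_mul_Lq μ hpq
    (f := fun x => f x * (m x) ^ (1/2 : ℝ)) (g := fun x => (m x) ^ (1/2 : ℝ))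
    ((hf.mul (hm.pow_const _))) (hm.pow_const _)
  have e2 : ∀ x : ℝ≥0∞, (x ^ (1/2:ℝ)) ^ (2:ℝ) = x := by
    intro x; rw [← ENNReal.rpow_mul]; norm_num
  simp only [Pi.mul_apply] at h
  have e1 : ∀ x, f x * m x ^ (1/2:ℝ) * m x ^ (1/2:ℝ) = f x * m x := by
    intro x
    rw [mul_assoc, ← ENNReal.rpow_add_of_nonneg _ _ (by norm_num) (by norm_num)]
    norm_num
  have e3 : ∀ x, (f x * m x ^ (1/2:ℝ)) ^ (2:ℝ) = f x ^ 2 * m x := by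
    intro x
    rw [ENNReal.mul_rpow_of_nonneg _ _ (by norm_num), e2, ← ENNReal.rpow_natCast (f x) 2]
    norm_num
  simp only [e1, e3, e2] at h
  calc (∫⁻ x, f x * m x ∂μ) ^ 2
      ≤ ((∫⁻ x, f x ^ 2 * m x ∂μ) ^ (1/2:ℝ) * (∫⁻ x, m x ∂μ) ^ (1/2:ℝ)) ^ 2 :=
        pow_le_pow_left₀ zero_le h 2
    _ = (∫⁻ x, f x ^ 2 * m x ∂μ) * ∫⁻ x, m x ∂μ := by
        rw [mul_pow, ← ENNReal.rpow_natCast ((∫⁻ x, f x ^ 2 * m x ∂μ) ^ (1/2:ℝ)) 2,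
          ← ENNReal.rpow_natCast ((∫⁻ x, m x ∂μ) ^ (1/2:ℝ)) 2]
        push_cast
        rw [e2, e2]

theorem scale_aux (f : ℝ → ℝ≥0∞) (hf : Measurable f) {c : ℝ} (hc : 0 < c) :
    ∫⁻ x, f (c * x) = ENNReal.ofReal c⁻¹ * ∫⁻ x, f x := by
  rw [← lintegral_map hf (measurable_const_mul c), Real.map_volume_mul_left hc.ne',
    lintegral_smul_measure, abs_of_pos (inv_pos.2 hc), smul_eq_mul]

theorem wgt_aux {b : ℝ} (hb : 0 < b) :
    ∫⁻ τ in Ioi (0:ℝ), ENNReal.ofReal (b * Real.exp (-b * τ)) = 1 := by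
  have hint : IntegrableOn (fun τ => b * Real.exp (-b * τ)) (Ioi 0) :=
    (exp_neg_integrableOn_Ioi 0 hb).const_mul b
  rw [← ofReal_integral_eq_lintegral_ofReal hint
    (Filter.Eventually.of_forall fun τ => by positivity)]
  have h1 : ∫ τ in Ioi (0:ℝ), b * Real.exp (-b * τ) = 1 := by
    have := integral_comp_mul_left_Ioi (fun x => Real.exp (-x)) 0 hb
    simp only [mul_zero, integral_exp_neg_Ioi, neg_zero, Real.exp_zero, smul_eq_mul,
      mul_one] at this
    simp only [neg_mul] at *
    rw [integral_const_mul, this]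
    field_simp
  rw [h1, ENNReal.ofReal_one]

set_option maxHeartbeats 2000000 in
theorem trace_aux {E : Type*} [NormedAddCommGroup E] [NormedSpace ℝ E] [MeasureSpace E]
    [BorelSpace E] [SecondCountableTopology E]
    [(volume : Measure E).IsAddRightInvariant] [SigmaFinite (volume : Measure E)]
    (ν₀ : ℝ) (hν : 0 < ν₀) (F : E × ℝ → ℝ) (hFm : Measurable F) (hFpos : ∀ w, 0 ≤ F w)
    (hFi : Integrable F) (hFint : ∫ w, F w = 1)
    (hFmom : IntegrableOn (fun w => F w * w.2) {w : E × ℝ | 0 < w.2})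
    (hFmompos : 0 < ∫ w in {w : E × ℝ | 0 < w.2}, F w * w.2)
    {ε : ℝ} (hε : ε ∈ Set.Ioo (0:ℝ) 1) (ρ : E × ℝ → ℝ) (hρm : Measurable ρ)
    (hρ2 : MemLp ρ 2 volume) :
    ∫ y : E, ((∫ w in {w : E × ℝ | 0 < w.2},
        (∫ τ in Set.Ioi (0:ℝ), ν₀ * Real.exp (-ν₀ * τ) * ρ ((y, (0:ℝ)) + (ε * τ) • w))
          * F w * w.2) / (∫ w in {w : E × ℝ | 0 < w.2}, F w * w.2)) ^ 2
      ≤ ε⁻¹ * ν₀ * (∫ w in {w : E × ℝ | 0 < w.2}, F w * w.2)⁻¹ * ∫ z, ρ z ^ 2 := by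
  obtain ⟨hε0, hε1⟩ := hε
  set S : Set (E × ℝ) := {w | 0 < w.2} with hSdef
  have hSm : MeasurableSet S := measurable_snd measurableSet_Ioi
  set C : ℝ := ∫ w in S, F w * w.2 with hCdef
  have hC : 0 < C := hFmompos
  set q : E × ℝ → ℝ≥0∞ := fun z => ENNReal.ofReal (ρ z ^ 2) with hqdef
  set a : E × ℝ → ℝ≥0∞ := fun z => ENNReal.ofReal |ρ z| with hadef
  have haq : ∀ z, a z ^ 2 = q z := fun z => by
    rw [hadef, hqdef, ← ENNReal.ofReal_pow (abs_nonneg _), sq_abs]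
  set wgt : ℝ → ℝ≥0∞ := fun τ => ENNReal.ofReal (ν₀ * Real.exp (-ν₀ * τ)) with hwdef
  set m : E × ℝ → ℝ≥0∞ := fun w => ENNReal.ofReal (F w * w.2) with hmdef
  set ψ : E → (E × ℝ) → ℝ → (E × ℝ) := fun y w τ => (y, (0:ℝ)) + (ε * τ) • w with hψdef
  -- measurability of the base map
  have hψm : Measurable (fun p : (E × (E × ℝ)) × ℝ => ψ p.1.1 p.1.2 p.2) := by
    apply Continuous.measurable
    exact (continuous_fst.fst.prodMk continuous_const).add
      ((continuous_const.mul continuous_snd).smul continuous_fst.snd)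
  -- basic measurability
  have hqm : Measurable q := (hρm.pow_const 2).ennreal_ofReal
  have ham : Measurable a := hρm.abs.ennreal_ofReal
  have hwm : Measurable wgt := by
    apply Measurable.ennreal_ofReal; fun_prop
  have hmm : Measurable m := (hFm.mul measurable_snd).ennreal_ofReal
  have hψprod : ∀ y w τ, ψ y w τ = (y + (ε * τ) • w.1, ε * τ * w.2) := by
    intro y w τ
    rw [hψdef]
    refine Prod.ext ?_ ?_ <;> simp [smul_eq_mul]
  have hQj : Measurable (fun p : E × (E × ℝ) => ∫⁻ τ in Ioi (0:ℝ), wgt τ * q (ψ p.1 p.2 τ)) :=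
    Measurable.lintegral_prod_right' ((hwm.comp measurable_snd).mul (hqm.comp hψm))
  have hIj : Measurable (fun p : E × (E × ℝ) => ∫⁻ τ in Ioi (0:ℝ), wgt τ * a (ψ p.1 p.2 τ)) :=
    Measurable.lintegral_prod_right' ((hwm.comp measurable_snd).mul (ham.comp hψm))
  set k : E → (E × ℝ) → ℝ := fun y w => ∫ τ in Ioi (0:ℝ),
    ν₀ * Real.exp (-ν₀ * τ) * ρ (ψ y w τ) with hkdef
  set num : E → ℝ := fun y => ∫ w in S, k y w * F w * w.2 with hnumdef
  have hkm : StronglyMeasurable (fun p : E × (E × ℝ) => k p.1 p.2) := by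
    apply MeasureTheory.StronglyMeasurable.integral_prod_right'
      (f := fun pp : (E × (E × ℝ)) × ℝ => ν₀ * Real.exp (-ν₀ * pp.2) * ρ (ψ pp.1.1 pp.1.2 pp.2))
    apply Measurable.stronglyMeasurable
    exact ((by fun_prop : Measurable fun pp : (E × (E × ℝ)) × ℝ =>
      ν₀ * Real.exp (-ν₀ * pp.2)).mul (hρm.comp hψm))
  have hnum_sm : StronglyMeasurable num := by
    apply MeasureTheory.StronglyMeasurable.integral_prod_right'
      (f := fun p : E × (E × ℝ) => k p.1 p.2 * F p.2 * p.2.2)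
    exact (hkm.mul (hFm.comp measurable_snd).stronglyMeasurable).mul
      (measurable_snd.snd).stronglyMeasurable
  have hW : ∫⁻ τ in Ioi (0:ℝ), wgt τ = 1 := wgt_aux hν
  suffices hfinal : (∫ y : E, (num y / C) ^ 2) ≤ ε⁻¹ * ν₀ * C⁻¹ * ∫ z, ρ z ^ 2 by
    simp only [hnumdef, hkdef, hψdef] at hfinal
    exact hfinal
  clear_value S C q a wgt m ψ k num
  have hSmem : ∀ {w : E × ℝ}, w ∈ S → 0 < w.2 := fun {w} hw => by
    rw [hSdef] at hw; exact hw
  have hmtop : ∀ w, m w ≠ ⊤ := fun w => by rw [hmdef]; exact ENNReal.ofReal_ne_top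
  have hIsec : ∀ y, Measurable (fun w : E × ℝ => ∫⁻ τ in Ioi (0:ℝ), wgt τ * a (ψ y w τ)) :=
    fun y => hIj.comp measurable_prodMk_left
  have hQsec : ∀ y, Measurable (fun w : E × ℝ => ∫⁻ τ in Ioi (0:ℝ), wgt τ * q (ψ y w τ)) :=
    fun y => hQj.comp measurable_prodMk_left
  have hMS : ∫⁻ w in S, m w = ENNReal.ofReal C := by
    simp only [hmdef, hCdef]
    exact (ofReal_integral_eq_lintegral_ofReal hFmom ((ae_restrict_iff' hSm).2
      (Filter.Eventually.of_forall fun w hw => mul_nonneg (hFpos w) (le_of_lt (hSmem hw))))).symm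
  -- inner Cauchy-Schwarz
  have hinner : ∀ y w, (∫⁻ τ in Ioi (0:ℝ), wgt τ * a (ψ y w τ)) ^ 2
      ≤ ∫⁻ τ in Ioi (0:ℝ), wgt τ * q (ψ y w τ) := by
    intro y w
    have hψsec : Measurable (fun τ : ℝ => ψ y w τ) :=
      hψm.comp (measurable_prodMk_left (x := (y, w)))
    have hca : Measurable fun τ => a (ψ y w τ) := ham.comp hψsec
    have h := cs_aux (volume.restrict (Ioi 0)) (fun τ => a (ψ y w τ)) wgt
      hca.aemeasurable hwm.aemeasurable
    calc (∫⁻ τ in Ioi (0:ℝ), wgt τ * a (ψ y w τ)) ^ 2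
        = (∫⁻ τ in Ioi (0:ℝ), a (ψ y w τ) * wgt τ) ^ 2 := by
          congr 1; exact lintegral_congr fun τ => mul_comm _ _
      _ ≤ (∫⁻ τ in Ioi (0:ℝ), a (ψ y w τ) ^ 2 * wgt τ) * ∫⁻ τ in Ioi (0:ℝ), wgt τ := h
      _ = ∫⁻ τ in Ioi (0:ℝ), wgt τ * q (ψ y w τ) := by
          rw [hW, mul_one]
          exact lintegral_congr fun τ => by rw [haq, mul_comm]
  -- pointwise bound
  have hB1 : ∀ y, ENNReal.ofReal (num y ^ 2)
      ≤ ((∫⁻ w in S, (∫⁻ τ in Ioi (0:ℝ), wgt τ * q (ψ y w τ)) * m w) * ENNReal.ofReal C) := by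
    intro y
    have h1 : ENNReal.ofReal ‖num y‖ ≤ ∫⁻ w in S, ENNReal.ofReal ‖k y w * F w * w.2‖ := by
      refine le_trans ?_ ENNReal.ofReal_toReal_le
      refine ENNReal.ofReal_le_ofReal ?_
      rw [hnumdef]
      exact norm_integral_le_lintegral_norm _
    have h2 : ∀ w ∈ S, ENNReal.ofReal ‖k y w * F w * w.2‖
        ≤ (∫⁻ τ in Ioi (0:ℝ), wgt τ * a (ψ y w τ)) * m w := by
      intro w hw
      have hw2 : (0:ℝ) < w.2 := hSmem hw
      have hF2 : 0 ≤ F w * w.2 := mul_nonneg (hFpos w) hw2.le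
      have e : ‖k y w * F w * w.2‖ = ‖k y w‖ * (F w * w.2) := by
        simp only [Real.norm_eq_abs]
        rw [mul_assoc, abs_mul, abs_mul, abs_of_nonneg (hFpos w), abs_of_nonneg hw2.le]
      rw [e, ENNReal.ofReal_mul (norm_nonneg _)]
      simp only [hmdef]
      refine mul_le_mul_left ?_ (ENNReal.ofReal (F w * w.2))
      have e2 : ∀ τ, ENNReal.ofReal ‖ν₀ * Real.exp (-ν₀ * τ) * ρ (ψ y w τ)‖
          = wgt τ * a (ψ y w τ) := by
        intro τ
        simp only [hwdef, hadef]
        rw [Real.norm_eq_abs, abs_mul,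
          abs_of_nonneg (by positivity : (0:ℝ) ≤ ν₀ * Real.exp (-ν₀ * τ)),
          ENNReal.ofReal_mul (by positivity)]
      calc ENNReal.ofReal ‖k y w‖
          ≤ ENNReal.ofReal ((∫⁻ τ in Ioi (0:ℝ),
              ENNReal.ofReal ‖ν₀ * Real.exp (-ν₀ * τ) * ρ (ψ y w τ)‖).toReal) := by
            refine ENNReal.ofReal_le_ofReal ?_
            rw [hkdef]
            exact norm_integral_le_lintegral_norm _
        _ ≤ ∫⁻ τ in Ioi (0:ℝ), ENNReal.ofReal ‖ν₀ * Real.exp (-ν₀ * τ) * ρ (ψ y w τ)‖ :=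
            ENNReal.ofReal_toReal_le
        _ = ∫⁻ τ in Ioi (0:ℝ), wgt τ * a (ψ y w τ) := lintegral_congr fun τ => e2 τ
    have h3 : ENNReal.ofReal ‖num y‖
        ≤ ∫⁻ w in S, (∫⁻ τ in Ioi (0:ℝ), wgt τ * a (ψ y w τ)) * m w :=
      h1.trans (setLIntegral_mono' hSm h2)
    have h4 : ENNReal.ofReal (num y ^ 2)
        ≤ (∫⁻ w in S, (∫⁻ τ in Ioi (0:ℝ), wgt τ * a (ψ y w τ)) * m w) ^ 2 := by
      calc ENNReal.ofReal (num y ^ 2) = ENNReal.ofReal ‖num y‖ ^ 2 := by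
            rw [Real.norm_eq_abs, ← sq_abs (num y), ENNReal.ofReal_pow (abs_nonneg _)]
        _ ≤ _ := pow_le_pow_left₀ zero_le h3 2
    refine h4.trans ?_
    -- outer Cauchy-Schwarz
    have h5 := cs_aux (volume.restrict S)
      (fun w => ∫⁻ τ in Ioi (0:ℝ), wgt τ * a (ψ y w τ)) m
      (hIsec y).aemeasurable hmm.aemeasurable
    rw [hMS] at h5
    refine h5.trans (mul_le_mul_left (lintegral_mono fun w => ?_) _)
    exact mul_le_mul_left (hinner y w) (m w)
  -- slice function G and total mass R
  set G : ℝ → ℝ≥0∞ := fun s => ∫⁻ u : E, q (u, s) with hGdef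
  have hGm : Measurable G := hqm.lintegral_prod_left'
  set R : ℝ≥0∞ := ∫⁻ z : E × ℝ, q z with hRdef
  have hGR : ∫⁻ s : ℝ, G s = R := by
    rw [hGdef, hRdef, Measure.volume_eq_prod, lintegral_prod _ hqm.aemeasurable]
    exact (lintegral_lintegral_swap (f := fun u s => q (u, s))
      ((hqm.comp (measurable_fst.prodMk measurable_snd)).aemeasurable)).symm
  have hRfin : R = ENNReal.ofReal (∫ z, ρ z ^ 2) := by
    rw [hRdef, hqdef]
    exact (ofReal_integral_eq_lintegral_ofReal hρ2.integrable_sq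
      (Filter.Eventually.of_forall fun z => sq_nonneg _)).symm
  clear_value G R
  -- per-w estimate
  have hQy : ∀ w ∈ S, (∫⁻ y : E, ∫⁻ τ in Ioi (0:ℝ), wgt τ * q (ψ y w τ))
      ≤ ENNReal.ofReal ν₀ * (ENNReal.ofReal (ε * w.2))⁻¹ * R := by
    intro w hw
    have hw2 : (0:ℝ) < w.2 := hSmem hw
    have hc : 0 < ε * w.2 := mul_pos hε0 hw2
    have hmap : Measurable fun p : E × ℝ => ((p.1, w), p.2) :=
      (measurable_fst.prodMk measurable_const).prodMk measurable_snd
    have hswap : (∫⁻ y : E, ∫⁻ τ in Ioi (0:ℝ), wgt τ * q (ψ y w τ))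
        = ∫⁻ τ in Ioi (0:ℝ), ∫⁻ y : E, wgt τ * q (ψ y w τ) := by
      apply lintegral_lintegral_swap
      exact (((hwm.comp measurable_snd).mul (hqm.comp hψm)).comp hmap).aemeasurable
    rw [hswap]
    have hψy : ∀ τ : ℝ, Measurable fun y : E => q (ψ y w τ) := by
      intro τ
      have hmap2 : Measurable fun y : E => ((y, w), τ) :=
        (measurable_id.prodMk measurable_const).prodMk measurable_const
      exact (hqm.comp hψm).comp hmap2
    have hstep : ∀ τ ∈ Ioi (0:ℝ), (∫⁻ y : E, wgt τ * q (ψ y w τ)) = wgt τ * G (ε * τ * w.2) := by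
      intro τ _
      rw [lintegral_const_mul _ (hψy τ)]
      congr 1
      calc ∫⁻ y : E, q (ψ y w τ)
          = ∫⁻ y : E, q (y + (ε * τ) • w.1, ε * τ * w.2) :=
            lintegral_congr fun y => by rw [hψprod]
        _ = G (ε * τ * w.2) := by
            rw [hGdef]
            exact lintegral_add_right_eq_self (fun u : E => q (u, ε * τ * w.2)) ((ε * τ) • w.1)
    calc ∫⁻ τ in Ioi (0:ℝ), ∫⁻ y : E, wgt τ * q (ψ y w τ)
        = ∫⁻ τ in Ioi (0:ℝ), wgt τ * G (ε * τ * w.2) :=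
          setLIntegral_congr_fun measurableSet_Ioi hstep
      _ ≤ ∫⁻ τ in Ioi (0:ℝ), ENNReal.ofReal ν₀ * G ((ε * w.2) * τ) := by
          refine setLIntegral_mono' measurableSet_Ioi fun τ hτ => ?_
          have hτ0 : (0:ℝ) < τ := hτ
          have e : ε * τ * w.2 = (ε * w.2) * τ := by ring
          rw [e]
          refine mul_le_mul_left ?_ _
          rw [hwdef]
          refine ENNReal.ofReal_le_ofReal ?_
          have h1 : Real.exp (-ν₀ * τ) ≤ 1 :=
            Real.exp_le_one_iff.mpr (by nlinarith)
          nlinarith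
      _ = ENNReal.ofReal ν₀ * ∫⁻ τ in Ioi (0:ℝ), G ((ε * w.2) * τ) :=
          lintegral_const_mul _ (hGm.comp (measurable_id.const_mul _))
      _ ≤ ENNReal.ofReal ν₀ * ∫⁻ τ : ℝ, G ((ε * w.2) * τ) :=
          mul_le_mul_right (setLIntegral_le_lintegral _ _) _
      _ = ENNReal.ofReal ν₀ * (ENNReal.ofReal ((ε * w.2)⁻¹) * ∫⁻ s, G s) := by
          rw [scale_aux G hGm hc]
      _ = ENNReal.ofReal ν₀ * (ENNReal.ofReal (ε * w.2))⁻¹ * R := by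
          rw [hGR, ENNReal.ofReal_inv_of_pos hc, ← mul_assoc]
  -- integrate the estimate over S
  have hJ : (∫⁻ y : E, ∫⁻ w in S, (∫⁻ τ in Ioi (0:ℝ), wgt τ * q (ψ y w τ)) * m w)
      ≤ ENNReal.ofReal ν₀ * (ENNReal.ofReal ε)⁻¹ * R := by
    have hswap2 : (∫⁻ y : E, ∫⁻ w in S, (∫⁻ τ in Ioi (0:ℝ), wgt τ * q (ψ y w τ)) * m w)
        = ∫⁻ w in S, ∫⁻ y : E, (∫⁻ τ in Ioi (0:ℝ), wgt τ * q (ψ y w τ)) * m w := by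
      apply lintegral_lintegral_swap
      exact (hQj.mul (hmm.comp measurable_snd)).aemeasurable
    rw [hswap2]
    have hεne : ENNReal.ofReal ε ≠ 0 := (ENNReal.ofReal_pos.2 hε0).ne'
    calc ∫⁻ w in S, ∫⁻ y : E, (∫⁻ τ in Ioi (0:ℝ), wgt τ * q (ψ y w τ)) * m w
        ≤ ∫⁻ w in S, (ENNReal.ofReal ν₀ * (ENNReal.ofReal (ε * w.2))⁻¹ * R) * m w := by
          refine setLIntegral_mono' hSm fun w hw => ?_
          rw [lintegral_mul_const' (m w) _ (hmtop w)]
          exact mul_le_mul_left (hQy w hw) _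
      _ = ∫⁻ w in S, (ENNReal.ofReal ν₀ * (ENNReal.ofReal ε)⁻¹ * R) * ENNReal.ofReal (F w) := by
          refine setLIntegral_congr_fun hSm (fun w hw => ?_)
          have hw2 : (0:ℝ) < w.2 := hSmem hw
          have hwne : ENNReal.ofReal w.2 ≠ 0 := (ENNReal.ofReal_pos.2 hw2).ne'
          have e1 : ENNReal.ofReal (ε * w.2) = ENNReal.ofReal ε * ENNReal.ofReal w.2 :=
            ENNReal.ofReal_mul hε0.le
          have e2 : m w = ENNReal.ofReal (F w) * ENNReal.ofReal w.2 := by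
            rw [hmdef]; exact ENNReal.ofReal_mul (hFpos w)
          have e3 : (ENNReal.ofReal w.2)⁻¹ * ENNReal.ofReal w.2 = 1 :=
            ENNReal.inv_mul_cancel hwne ENNReal.ofReal_ne_top
          rw [e1, e2, ENNReal.mul_inv (Or.inl hεne) (Or.inl ENNReal.ofReal_ne_top)]
          calc ENNReal.ofReal ν₀ * ((ENNReal.ofReal ε)⁻¹ * (ENNReal.ofReal w.2)⁻¹) * R
                * (ENNReal.ofReal (F w) * ENNReal.ofReal w.2)
              = ENNReal.ofReal ν₀ * (ENNReal.ofReal ε)⁻¹ * R * ENNReal.ofReal (F w)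
                * ((ENNReal.ofReal w.2)⁻¹ * ENNReal.ofReal w.2) := by ring
            _ = ENNReal.ofReal ν₀ * (ENNReal.ofReal ε)⁻¹ * R * ENNReal.ofReal (F w) := by
                rw [e3, mul_one]
      _ = (ENNReal.ofReal ν₀ * (ENNReal.ofReal ε)⁻¹ * R) * ∫⁻ w in S, ENNReal.ofReal (F w) :=
          lintegral_const_mul _ hFm.ennreal_ofReal
      _ ≤ (ENNReal.ofReal ν₀ * (ENNReal.ofReal ε)⁻¹ * R) * 1 := by
          refine mul_le_mul_right ?_ _
          calc ∫⁻ w in S, ENNReal.ofReal (F w)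
              ≤ ∫⁻ w, ENNReal.ofReal (F w) := setLIntegral_le_lintegral _ _
            _ = ENNReal.ofReal (∫ w, F w) :=
                (ofReal_integral_eq_lintegral_ofReal hFi
                  (Filter.Eventually.of_forall hFpos)).symm
            _ = 1 := by rw [hFint, ENNReal.ofReal_one]
      _ = ENNReal.ofReal ν₀ * (ENNReal.ofReal ε)⁻¹ * R := mul_one _
  -- put the pointwise bounds together
  have hCne : ENNReal.ofReal C ≠ 0 := (ENNReal.ofReal_pos.2 hC).ne'
  have htotal : (∫⁻ y : E, ENNReal.ofReal ((num y / C) ^ 2))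
      ≤ (ENNReal.ofReal ν₀ * (ENNReal.ofReal ε)⁻¹ * R) / ENNReal.ofReal C := by
    have step : ∀ y, ENNReal.ofReal ((num y / C) ^ 2)
        ≤ (∫⁻ w in S, (∫⁻ τ in Ioi (0:ℝ), wgt τ * q (ψ y w τ)) * m w) / ENNReal.ofReal C := by
      intro y
      have e : (num y / C) ^ 2 = num y ^ 2 / C ^ 2 := div_pow _ _ 2
      rw [e, ENNReal.ofReal_div_of_pos (pow_pos hC 2)]
      have e3 : ENNReal.ofReal (C ^ 2) = ENNReal.ofReal C * ENNReal.ofReal C := by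
        rw [sq, ENNReal.ofReal_mul hC.le]
      rw [e3]
      calc ENNReal.ofReal (num y ^ 2) / (ENNReal.ofReal C * ENNReal.ofReal C)
          ≤ ((∫⁻ w in S, (∫⁻ τ in Ioi (0:ℝ), wgt τ * q (ψ y w τ)) * m w) * ENNReal.ofReal C)
              / (ENNReal.ofReal C * ENNReal.ofReal C) :=
            ENNReal.div_le_div_right (hB1 y) _
        _ = (∫⁻ w in S, (∫⁻ τ in Ioi (0:ℝ), wgt τ * q (ψ y w τ)) * m w) / ENNReal.ofReal C := by
            rw [ENNReal.mul_div_mul_right _ _ hCne ENNReal.ofReal_ne_top]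
    calc (∫⁻ y : E, ENNReal.ofReal ((num y / C) ^ 2))
        ≤ ∫⁻ y : E, (∫⁻ w in S, (∫⁻ τ in Ioi (0:ℝ), wgt τ * q (ψ y w τ)) * m w)
            / ENNReal.ofReal C := lintegral_mono step
      _ = (∫⁻ y : E, ∫⁻ w in S, (∫⁻ τ in Ioi (0:ℝ), wgt τ * q (ψ y w τ)) * m w)
            / ENNReal.ofReal C := by
          simp_rw [div_eq_mul_inv]
          exact lintegral_mul_const' _ _ (ENNReal.inv_ne_top.2 hCne)
      _ ≤ _ := ENNReal.div_le_div_right hJ _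
  -- pass to the real-valued statement
  have hg_sm : AEStronglyMeasurable (fun y : E => (num y / C) ^ 2) volume :=
    ((hnum_sm.measurable.div_const C).pow_const 2).aestronglyMeasurable
  have hlhs : (∫ y : E, (num y / C) ^ 2)
      = (∫⁻ y : E, ENNReal.ofReal ((num y / C) ^ 2)).toReal := by
    rw [integral_eq_lintegral_of_nonneg_ae (Filter.Eventually.of_forall fun y => sq_nonneg _)
      hg_sm]
  rw [hlhs]
  rw [hRfin] at htotal
  have hfin : (ENNReal.ofReal ν₀ * (ENNReal.ofReal ε)⁻¹ * ENNReal.ofReal (∫ z, ρ z ^ 2))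
      / ENNReal.ofReal C ≠ ⊤ := by
    rw [div_eq_mul_inv]
    exact ENNReal.mul_ne_top
      (ENNReal.mul_ne_top
        (ENNReal.mul_ne_top ENNReal.ofReal_ne_top
          (ENNReal.inv_ne_top.2 ((ENNReal.ofReal_pos.2 hε0).ne')))
        ENNReal.ofReal_ne_top)
      (ENNReal.inv_ne_top.2 hCne)
  refine le_trans (ENNReal.toReal_mono hfin htotal) ?_
  rw [ENNReal.toReal_div, ENNReal.toReal_mul, ENNReal.toReal_mul, ENNReal.toReal_inv,
    ENNReal.toReal_ofReal hν.le, ENNReal.toReal_ofReal hε0.le, ENNReal.toReal_ofReal hC.le,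
    ENNReal.toReal_ofReal (integral_nonneg fun z => sq_nonneg _)]
  exact le_of_eq (by ring)

/-- Trace estimate: the averaged boundary trace `T_ε ρ` satisfies
`∫_{∂Ω} |T_ε ρ|² dσ ≤ ε⁻¹ ν₀ c₀' ‖ρ‖²_{L²(Ω)}`, with `∂Ω = ℝ^{d-1}` and
`Ω = ℝ^{d-1} × (0,∞)` represented as a product. -/
theorem stmt18 (d : ℕ) (hd : 1 ≤ d) (ν₀ : ℝ) (hν : 0 < ν₀)
    (F : (EuclideanSpace ℝ (Fin (d-1)) × ℝ) → ℝ) (hFm : Measurable F)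
    (hFpos : ∀ w, 0 ≤ F w) (hFi : Integrable F) (hFint : ∫ w, F w = 1)
    (hFmom : MeasureTheory.IntegrableOn (fun w => F w * w.2)
      {w : EuclideanSpace ℝ (Fin (d-1)) × ℝ | 0 < w.2})
    (hFmompos : 0 < ∫ w in {w : EuclideanSpace ℝ (Fin (d-1)) × ℝ | 0 < w.2}, F w * w.2) :
    ∃ c₀' > (0:ℝ), ∀ ε ∈ Set.Ioo (0:ℝ) 1,
      ∀ ρ : (EuclideanSpace ℝ (Fin (d-1)) × ℝ) → ℝ, Measurable ρ →
        MeasureTheory.MemLp ρ 2 (volume : MeasureTheory.Measure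
          (EuclideanSpace ℝ (Fin (d-1)) × ℝ)) →
        ∫ y : EuclideanSpace ℝ (Fin (d-1)),
          ((∫ w in {w : EuclideanSpace ℝ (Fin (d-1)) × ℝ | 0 < w.2},
              (∫ τ in Set.Ioi (0:ℝ), ν₀ * Real.exp (-ν₀ * τ) *
                ρ ((y, (0:ℝ)) + (ε * τ) • w)) * F w * w.2)
            / (∫ w in {w : EuclideanSpace ℝ (Fin (d-1)) × ℝ | 0 < w.2}, F w * w.2)) ^ 2
        ≤ ε⁻¹ * ν₀ * c₀' * ∫ z, ρ z ^ 2 := by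
  refine ⟨(∫ w in {w : EuclideanSpace ℝ (Fin (d-1)) × ℝ | 0 < w.2}, F w * w.2)⁻¹,
    inv_pos.2 hFmompos, ?_⟩
  intro ε hε ρ hρm hρ2
  exact trace_aux ν₀ hν F hFm hFpos hFi hFint hFmom hFmompos hε ρ hρm hρ2
end
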